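/- arXiv:1405.0913 — 4 statements merged into one kernel-verified Lean document; each statement's English description precedes it below -/
import Mathlib

section
/- If f_X is positive on (a,b), has at least three continuous derivatives on (a,b), and its fourth derivative exists (Lebesgue-)almost everywhere on (a,b), then the transformed density f_Y is positive on ℝ, has at least three continuous derivatives on ℝ, and its fourth derivative exists almost everywhere on ℝ. -/
open MeasureTheory
open scoped ContDiff

noncomputable def tg (a b : ℝ) : ℝ → ℝ := fun y => (a + b * Real.exp y) / (1 + Real.exp y)
noncomputable def tphi (a b : ℝ) : ℝ → ℝ := fun y => (b - a) * (Real.exp y / (1 + Real.exp y) ^ 2)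
noncomputable def tL (a b : ℝ) : ℝ → ℝ := fun x => Real.log (x - a) - Real.log (b - x)

lemma tden_ne (y : ℝ) : (1 : ℝ) + Real.exp y ≠ 0 := by positivity

lemma tg_mem {a b : ℝ} (hab : a < b) (y : ℝ) : tg a b y ∈ Set.Ioo a b := by
  have he : 0 < Real.exp y := Real.exp_pos y
  have hd : 0 < 1 + Real.exp y := by positivity
  constructor
  · rw [tg, lt_div_iff₀ hd]; nlinarith
  · rw [tg, div_lt_iff₀ hd]; nlinarith

lemma tg_smooth (a b : ℝ) : ContDiff ℝ ∞ (tg a b) := by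
  apply ContDiff.div
  · exact contDiff_const.add (contDiff_const.mul Real.contDiff_exp)
  · exact contDiff_const.add Real.contDiff_exp
  · exact tden_ne

lemma tphi_smooth (a b : ℝ) : ContDiff ℝ ∞ (tphi a b) := by
  apply ContDiff.mul contDiff_const
  apply ContDiff.div Real.contDiff_exp
  · exact (contDiff_const.add Real.contDiff_exp).pow 2
  · exact fun y => pow_ne_zero 2 (tden_ne y)

lemma tphi_pos {a b : ℝ} (hab : a < b) (y : ℝ) : 0 < tphi a b y := by
  have h1 : 0 < b - a := sub_pos.mpr hab
  have he : 0 < Real.exp y := Real.exp_pos y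
  have hd : 0 < 1 + Real.exp y := by positivity
  exact mul_pos h1 (div_pos he (by positivity))

lemma tL_tg {a b : ℝ} (hab : a < b) (y : ℝ) : tL a b (tg a b y) = y := by
  have he : 0 < Real.exp y := Real.exp_pos y
  have hd : 0 < 1 + Real.exp y := by positivity
  have h1 : tg a b y - a = (b - a) * Real.exp y / (1 + Real.exp y) := by
    rw [tg]; field_simp; ring
  have h2 : b - tg a b y = (b - a) / (1 + Real.exp y) := by
    rw [tg]; field_simp; ring
  have hba : 0 < b - a := sub_pos.mpr hab
  rw [tL, h1, h2, div_eq_mul_inv ((b-a) * Real.exp y), Real.log_mul (by positivity) (by positivity),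
    Real.log_mul (by positivity) (Real.exp_ne_zero y), div_eq_mul_inv (b-a),
    Real.log_mul (by positivity) (by positivity), Real.log_exp]
  ring

lemma tg_tL {a b : ℝ} (hab : a < b) {x : ℝ} (hx : x ∈ Set.Ioo a b) : tg a b (tL a b x) = x := by
  have hxa : 0 < x - a := sub_pos.mpr hx.1
  have hbx : 0 < b - x := sub_pos.mpr hx.2
  rw [tg, tL, Real.exp_sub, Real.exp_log hxa, Real.exp_log hbx]
  have hne : (1 : ℝ) + (x - a)/(b - x) ≠ 0 := by
    have h : (1 : ℝ) + (x - a)/(b - x) = (b - a)/(b - x) := by field_simp; ring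
    rw [h]
    exact div_ne_zero (by linarith [hx.1, hx.2]) (ne_of_gt hbx)
  rw [div_eq_iff hne]
  field_simp
  ring

lemma tL_hasDerivAt {a b : ℝ} {x : ℝ} (hx : x ∈ Set.Ioo a b) :
    HasDerivAt (tL a b) ((x - a)⁻¹ + (b - x)⁻¹) x := by
  have hxa : x - a ≠ 0 := sub_ne_zero.mpr (ne_of_gt hx.1)
  have hbx : b - x ≠ 0 := sub_ne_zero.mpr (ne_of_gt hx.2)
  have h1 : HasDerivAt (fun x => Real.log (x - a)) ((x - a)⁻¹) x := by
    have := (Real.hasDerivAt_log hxa).comp x ((hasDerivAt_id x).sub_const a)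
    simpa [Function.comp_def] using this
  have h2 : HasDerivAt (fun x => Real.log (b - x)) (-(b - x)⁻¹) x := by
    have := (Real.hasDerivAt_log hbx).comp x ((hasDerivAt_id x).const_sub b)
    simpa [Function.comp_def] using this
  have := h1.sub h2
  unfold tL
  simpa [sub_neg_eq_add, Pi.sub_def] using this

/-- If `f_X` is positive on `(a,b)`, has at least three continuous derivatives
on `(a,b)`, and its fourth derivative exists (Lebesgue-)almost everywhere on `(a,b)`, then the
transformed density `f_Y(y) = (b-a)·(e^y/(1+e^y)²)·f_X((a+b·e^y)/(1+e^y))` is positive on `ℝ`,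
has at least three continuous derivatives on `ℝ`, and its fourth derivative exists almost
everywhere on `ℝ`. -/
theorem transformed_density_regularity (a b : ℝ) (hab : a < b)
    (fX fY : ℝ → ℝ)
    (hfY : ∀ y : ℝ, fY y =
      (b - a) * (Real.exp y / (1 + Real.exp y) ^ 2) *
        fX ((a + b * Real.exp y) / (1 + Real.exp y)))
    (hpos : ∀ x ∈ Set.Ioo a b, 0 < fX x)
    (hsmooth : ContDiffOn ℝ 3 fX (Set.Ioo a b))
    (h4 : ∀ᵐ x ∂volume, x ∈ Set.Ioo a b → DifferentiableAt ℝ (iteratedDeriv 3 fX) x) :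
    (∀ y : ℝ, 0 < fY y) ∧ ContDiff ℝ 3 fY ∧
      ∀ᵐ y ∂volume, DifferentiableAt ℝ (iteratedDeriv 3 fY) y := by
  have hsopen : IsOpen (Set.Ioo a b) := isOpen_Ioo
  have hone : (∞ : WithTop ℕ∞) ≠ 0 := by simp
  have hgd : Differentiable ℝ (tg a b) := (tg_smooth a b).differentiable hone
  have hfYeq : ∀ y, fY y = tphi a b y * fX (tg a b y) := fun y => hfY y
  have hpos' : ∀ y, 0 < fY y := fun y => by
    rw [hfYeq y]; exact mul_pos (tphi_pos hab y) (hpos _ (tg_mem hab y))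
  have hcomp : ContDiff ℝ 3 fun y => fX (tg a b y) := by
    rw [← contDiffOn_univ]
    exact hsmooth.comp (((tg_smooth a b).of_le (WithTop.coe_le_coe.mpr le_top)).contDiffOn)
      (fun y _ => tg_mem hab y)
  have hfYsm : ContDiff ℝ 3 fY := by
    have h : fY = fun y => tphi a b y * fX (tg a b y) := funext hfYeq
    rw [h]
    exact ((tphi_smooth a b).of_le (WithTop.coe_le_coe.mpr le_top)).mul hcomp
  -- within-to-global iterated derivatives
  have hWeq : ∀ (k : ℕ) {x : ℝ}, x ∈ Set.Ioo a b →
      iteratedDerivWithin k fX (Set.Ioo a b) x = iteratedDeriv k fX x := by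
    intro k x hx
    rw [iteratedDerivWithin_eq_iteratedFDerivWithin, iteratedDeriv_eq_iteratedFDeriv,
      iteratedFDerivWithin_of_isOpen k hsopen hx]
  have hdk : ∀ k : ℕ, k < 3 → ∀ x ∈ Set.Ioo a b, DifferentiableAt ℝ (iteratedDeriv k fX) x := by
    intro k hk x hx
    have h1 : DifferentiableOn ℝ (iteratedDerivWithin k fX (Set.Ioo a b)) (Set.Ioo a b) :=
      hsmooth.differentiableOn_iteratedDerivWithin (by exact_mod_cast hk) hsopen.uniqueDiffOn
    have h2 := (h1 x hx).differentiableAt (hsopen.mem_nhds hx)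
    apply h2.congr_of_eventuallyEq
    filter_upwards [hsopen.mem_nhds hx] with y hy
    exact (hWeq k hy).symm
  have hdgT : ∀ k : ℕ, k < 3 → ∀ y : ℝ,
      DifferentiableAt ℝ (fun z => iteratedDeriv k fX (tg a b z)) y :=
    fun k hk y => (hdk k hk _ (tg_mem hab y)).comp y (hgd y)
  have keyH : ∀ (c : ℝ → ℝ), ContDiff ℝ ∞ c → ∀ k : ℕ, k < 3 → ∀ y : ℝ,
      HasDerivAt (fun z => c z * iteratedDeriv k fX (tg a b z))
        (deriv c y * iteratedDeriv k fX (tg a b y) +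
          (c y * deriv (tg a b) y) * iteratedDeriv (k + 1) fX (tg a b y)) y := by
    intro c hc k hk y
    have h1 : HasDerivAt c (deriv c y) y := (hc.differentiable hone y).hasDerivAt
    have hgdy : HasDerivAt (tg a b) (deriv (tg a b) y) y := (hgd y).hasDerivAt
    have h2 : HasDerivAt (iteratedDeriv k fX) (iteratedDeriv (k + 1) fX (tg a b y))
        (tg a b y) := by
      have h := (hdk k hk _ (tg_mem hab y)).hasDerivAt
      rwa [← iteratedDeriv_succ] at h
    have h3 := h2.comp y hgdy
    exact (h1.mul h3).congr_deriv (by simp only [Function.comp_apply]; ring)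
  have dsm : ∀ {c : ℝ → ℝ}, ContDiff ℝ ∞ c → ContDiff ℝ ∞ (deriv c) :=
    fun hc => (contDiff_infty_iff_deriv.mp hc).2
  have hgc' : ContDiff ℝ ∞ (deriv (tg a b)) := dsm (tg_smooth a b)
  have φs : ContDiff ℝ ∞ (tphi a b) := tphi_smooth a b
  have e1 : iteratedDeriv 1 fY = fun y =>
      deriv (tphi a b) y * iteratedDeriv 0 fX (tg a b y) +
        (tphi a b y * deriv (tg a b) y) * iteratedDeriv 1 fX (tg a b y) := by
    funext y
    rw [iteratedDeriv_one]
    have hfy0 : fY = fun z => tphi a b z * iteratedDeriv 0 fX (tg a b z) := by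
      funext z; rw [iteratedDeriv_zero]; exact hfYeq z
    rw [hfy0]
    exact (keyH (tphi a b) φs 0 (by norm_num) y).deriv
  have e2 : iteratedDeriv 2 fY = fun y =>
      (deriv (deriv (tphi a b)) y * iteratedDeriv 0 fX (tg a b y) +
        (deriv (tphi a b) y * deriv (tg a b) y) * iteratedDeriv 1 fX (tg a b y)) +
      (deriv (fun z => tphi a b z * deriv (tg a b) z) y * iteratedDeriv 1 fX (tg a b y) +
        ((tphi a b y * deriv (tg a b) y) * deriv (tg a b) y) *
          iteratedDeriv 2 fX (tg a b y)) := by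
    funext y
    rw [show (2 : ℕ) = 1 + 1 from rfl, iteratedDeriv_succ, e1]
    exact ((keyH (deriv (tphi a b)) (dsm φs) 0 (by norm_num) y).add
      (keyH (fun z => tphi a b z * deriv (tg a b) z) (φs.mul hgc') 1 (by norm_num) y)).deriv
  have e3 : iteratedDeriv 3 fY = fun y =>
      ((deriv (deriv (deriv (tphi a b))) y * iteratedDeriv 0 fX (tg a b y) +
          (deriv (deriv (tphi a b)) y * deriv (tg a b) y) * iteratedDeriv 1 fX (tg a b y)) +
        (deriv (fun z => deriv (tphi a b) z * deriv (tg a b) z) y *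
            iteratedDeriv 1 fX (tg a b y) +
          ((deriv (tphi a b) y * deriv (tg a b) y) * deriv (tg a b) y) *
            iteratedDeriv 2 fX (tg a b y))) +
      ((deriv (deriv (fun z => tphi a b z * deriv (tg a b) z)) y *
            iteratedDeriv 1 fX (tg a b y) +
          (deriv (fun z => tphi a b z * deriv (tg a b) z) y * deriv (tg a b) y) *
            iteratedDeriv 2 fX (tg a b y)) +
        (deriv (fun z => (tphi a b z * deriv (tg a b) z) * deriv (tg a b) z) y *
            iteratedDeriv 2 fX (tg a b y) +
          (((tphi a b y * deriv (tg a b) y) * deriv (tg a b) y) * deriv (tg a b) y) *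
            iteratedDeriv 3 fX (tg a b y))) := by
    funext y
    rw [show (3 : ℕ) = 2 + 1 from rfl, iteratedDeriv_succ, e2]
    exact (((keyH (deriv (deriv (tphi a b))) (dsm (dsm φs)) 0 (by norm_num) y).add
        (keyH (fun z => deriv (tphi a b) z * deriv (tg a b) z) ((dsm φs).mul hgc') 1
          (by norm_num) y)).add
      ((keyH (deriv (fun z => tphi a b z * deriv (tg a b) z)) (dsm (φs.mul hgc')) 1
          (by norm_num) y).add
        (keyH (fun z => (tphi a b z * deriv (tg a b) z) * deriv (tg a b) z)
          ((φs.mul hgc').mul hgc') 2 (by norm_num) y))).deriv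
  have hdiffY : ∀ y : ℝ, DifferentiableAt ℝ (iteratedDeriv 3 fX) (tg a b y) →
      DifferentiableAt ℝ (iteratedDeriv 3 fY) y := by
    intro y hy
    rw [e3]
    have A : ∀ {c : ℝ → ℝ}, ContDiff ℝ ∞ c → DifferentiableAt ℝ c y :=
      fun hc => hc.differentiable hone y
    have hT0 := hdgT 0 (by norm_num) y
    have hT1 := hdgT 1 (by norm_num) y
    have hT2 := hdgT 2 (by norm_num) y
    have hT3 : DifferentiableAt ℝ (fun z => iteratedDeriv 3 fX (tg a b z)) y :=
      hy.comp y (hgd y)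
    exact ((((A (dsm (dsm (dsm φs)))).mul hT0).add
        (((A (dsm (dsm φs))).mul (A hgc')).mul hT1)).add
      (((A (dsm ((dsm φs).mul hgc'))).mul hT1).add
        ((((A (dsm φs)).mul (A hgc')).mul (A hgc')).mul hT2))).add
      ((((A (dsm (dsm (φs.mul hgc')))).mul hT1).add
          (((A (dsm (φs.mul hgc'))).mul (A hgc')).mul hT2)).add
        (((A (dsm ((φs.mul hgc').mul hgc'))).mul hT2).add
          (((((A φs).mul (A hgc')).mul (A hgc')).mul (A hgc')).mul hT3)))
  -- a.e. part
  have hnull : volume {x | ¬(x ∈ Set.Ioo a b →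
      DifferentiableAt ℝ (iteratedDeriv 3 fX) x)} = 0 := ae_iff.mp h4
  obtain ⟨B, hNB, hBm, hB0⟩ := exists_measurable_superset_of_null hnull
  have hB'm : MeasurableSet (B ∩ Set.Ioo a b) := hBm.inter measurableSet_Ioo
  have hB'0 : volume (B ∩ Set.Ioo a b) = 0 := measure_mono_null Set.inter_subset_left hB0
  have himg : volume (tL a b '' (B ∩ Set.Ioo a b)) = 0 := by
    have hder : ∀ x ∈ B ∩ Set.Ioo a b, HasFDerivWithinAt (tL a b)
        (ContinuousLinearMap.smulRight (1 : ℝ →L[ℝ] ℝ) ((x - a)⁻¹ + (b - x)⁻¹))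
          (B ∩ Set.Ioo a b) x :=
      fun x hx => (tL_hasDerivAt hx.2).hasFDerivAt.hasFDerivWithinAt
    have hinj : Set.InjOn (tL a b) (B ∩ Set.Ioo a b) := fun x hx x' hx' h => by
      rw [← tg_tL hab hx.2, ← tg_tL hab hx'.2, h]
    have hh := lintegral_abs_det_fderiv_eq_addHaar_image volume hB'm hder hinj
    rw [← hh, setLIntegral_measure_zero _ _ hB'0]
  refine ⟨hpos', hfYsm, ?_⟩
  rw [ae_iff]
  apply measure_mono_null _ himg
  intro y hy
  have hgy : tg a b y ∈ B ∩ Set.Ioo a b := by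
    by_contra hgy
    apply hy
    apply hdiffY
    have h1 : tg a b y ∉ B := fun h => hgy ⟨h, tg_mem hab y⟩
    have h2 : tg a b y ∉ {x | ¬(x ∈ Set.Ioo a b →
        DifferentiableAt ℝ (iteratedDeriv 3 fX) x)} := fun h => h1 (hNB h)
    simp only [Set.mem_setOf_eq, not_not] at h2
    exact h2 (tg_mem hab y)
  exact ⟨tg a b y, hgy, tL_tg hab y⟩
end

section
/- Suppose f_X is positive with at least three continuous derivatives on (a,b), the fourth derivative of f_X exists almost everywhere on (a,b), and f_X satisfies the moment conditions ∫_a^b (f_X'(x)/f_X(x))⁴ f_X(x) dx < ∞, ∫_a^b (f_X''(x)/f_X(x))⁴ f_X(x) dx < ∞, ∫_a^b (f_X'''(x)/f_X(x))⁴ f_X(x) dx < ∞, and ∫_a^b |f_X''''(x)/f_X(x)| f_X(x) dx < ∞. Then the transformed density f_Y satisfies the corresponding moment conditions on ℝ: ∫_ℝ (f_Y'(y)/f_Y(y))⁴ f_Y(y) dy < ∞, ∫_ℝ (f_Y''(y)/f_Y(y))⁴ f_Y(y) dy < ∞, ∫_ℝ (f_Y'''(y)/f_Y(y))⁴ f_Y(y)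 dy < ∞, and ∫_ℝ |f_Y''''(y)/f_Y(y)| f_Y(y) dy < ∞. -/
open MeasureTheory

namespace TDMC
open Set


noncomputable def lg (a b y : ℝ) : ℝ := (a + b * Real.exp y) / (1 + Real.exp y)
noncomputable def lw (a b y : ℝ) : ℝ := (b - a) * (Real.exp y / (1 + Real.exp y) ^ 2)
noncomputable def lw1 (a b y : ℝ) : ℝ :=
  (b - a) * (Real.exp y * (1 - Real.exp y) / (1 + Real.exp y) ^ 3)
noncomputable def lw2 (a b y : ℝ) : ℝ :=
  (b - a) * (Real.exp y * (1 - 4 * Real.exp y + Real.exp y ^ 2) / (1 + Real.exp y) ^ 4)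
noncomputable def lw3 (a b y : ℝ) : ℝ :=
  (b - a) * (Real.exp y * (1 - 11 * Real.exp y + 11 * Real.exp y ^ 2 - Real.exp y ^ 3) /
    (1 + Real.exp y) ^ 5)
noncomputable def lw4 (a b y : ℝ) : ℝ :=
  (b - a) * (Real.exp y * (1 - 26 * Real.exp y + 66 * Real.exp y ^ 2 - 26 * Real.exp y ^ 3
    + Real.exp y ^ 4) / (1 + Real.exp y) ^ 6)

lemma one_add_exp_pos (y : ℝ) : (0:ℝ) < 1 + Real.exp y := by positivity

lemma one_add_exp_ne (y : ℝ) : (1:ℝ) + Real.exp y ≠ 0 := (one_add_exp_pos y).ne'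

lemma den_hasDerivAt (k : ℕ) (y : ℝ) : HasDerivAt (fun y => (1 + Real.exp y) ^ k)
    (k * (1 + Real.exp y) ^ (k - 1) * Real.exp y) y :=
  ((Real.hasDerivAt_exp y).const_add 1).pow k

lemma den_ne (k : ℕ) (y : ℝ) : (1 + Real.exp y) ^ k ≠ 0 := by positivity

lemma hasDerivAt_lg (a b y : ℝ) : HasDerivAt (lg a b) (lw a b y) y := by
  have h1 : HasDerivAt (fun y => a + b * Real.exp y) (b * Real.exp y) y := by
    simpa using ((Real.hasDerivAt_exp y).const_mul b).const_add a
  have h2 : HasDerivAt (fun y => 1 + Real.exp y) (Real.exp y) y :=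
    (Real.hasDerivAt_exp y).const_add 1
  refine (h1.div h2 (one_add_exp_ne y)).congr_deriv ?_
  unfold lw; field_simp; ring

lemma hasDerivAt_lw (a b y : ℝ) : HasDerivAt (lw a b) (lw1 a b y) y := by
  have he := Real.hasDerivAt_exp y
  refine ((he.div (den_hasDerivAt 2 y) (den_ne 2 y)).const_mul (b - a)).congr_deriv ?_
  unfold lw1; field_simp; ring

lemma hasDerivAt_lw1 (a b y : ℝ) : HasDerivAt (lw1 a b) (lw2 a b y) y := by
  have he := Real.hasDerivAt_exp y
  have hnum := he.mul (he.const_sub 1)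
  refine ((hnum.div (den_hasDerivAt 3 y) (den_ne 3 y)).const_mul (b - a)).congr_deriv ?_
  unfold lw2; simp only [Pi.mul_apply, Pi.add_apply, Pi.sub_apply, Pi.pow_apply]; field_simp; ring

lemma hasDerivAt_lw2 (a b y : ℝ) : HasDerivAt (lw2 a b) (lw3 a b y) y := by
  have he := Real.hasDerivAt_exp y
  have hnum := he.mul (((he.const_mul 4).const_sub 1).add (he.pow 2))
  refine ((hnum.div (den_hasDerivAt 4 y) (den_ne 4 y)).const_mul (b - a)).congr_deriv ?_
  unfold lw3; simp only [Pi.mul_apply, Pi.add_apply, Pi.sub_apply, Pi.pow_apply]; field_simp; ring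

lemma hasDerivAt_lw3 (a b y : ℝ) : HasDerivAt (lw3 a b) (lw4 a b y) y := by
  have he := Real.hasDerivAt_exp y
  have hnum := he.mul ((((he.const_mul 11).const_sub 1).add ((he.pow 2).const_mul 11)).sub
    (he.pow 3))
  refine ((hnum.div (den_hasDerivAt 5 y) (den_ne 5 y)).const_mul (b - a)).congr_deriv ?_
  unfold lw4; simp only [Pi.mul_apply, Pi.add_apply, Pi.sub_apply, Pi.pow_apply]; field_simp; ring


lemma lw_pos {a b : ℝ} (hab : a < b) (y : ℝ) : 0 < lw a b y := by
  unfold lw; have := sub_pos.mpr hab; positivity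

lemma lw_le {a b : ℝ} (hab : a < b) (y : ℝ) : lw a b y ≤ (b - a) / 4 := by
  unfold lw
  rw [mul_comm, div_mul_eq_mul_div, div_le_div_iff₀ (by positivity) (by norm_num)]
  have h := Real.exp_pos y
  nlinarith [sq_nonneg (1 - Real.exp y), sub_pos.mpr hab]

private lemma ratio_le {a b : ℝ} (hab : a < b) (y : ℝ) {r C : ℝ} (hC : 0 ≤ C)
    (hr : |r| ≤ C) : |lw a b y * r| ≤ C * lw a b y := by
  rw [abs_mul, abs_of_pos (lw_pos hab y), mul_comm C]
  exact mul_le_mul_of_nonneg_left hr (lw_pos hab y).le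

lemma abs_lw1_le {a b : ℝ} (hab : a < b) (y : ℝ) : |lw1 a b y| ≤ 1 * lw a b y := by
  have h : lw1 a b y = lw a b y * ((1 - Real.exp y) / (1 + Real.exp y)) := by
    unfold lw lw1; field_simp
  rw [h]
  refine ratio_le hab y zero_le_one ?_
  rw [abs_div, abs_of_pos (one_add_exp_pos y), div_le_one (one_add_exp_pos y), abs_le]
  have := Real.exp_pos y
  constructor <;> nlinarith

lemma abs_lw2_le {a b : ℝ} (hab : a < b) (y : ℝ) : |lw2 a b y| ≤ 2 * lw a b y := by
  have h : lw2 a b y = lw a b y * ((1 - 4 * Real.exp y + Real.exp y ^ 2)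
      / (1 + Real.exp y) ^ 2) := by
    unfold lw lw2; field_simp
  rw [h]
  refine ratio_le hab y (by norm_num) ?_
  rw [abs_div, abs_of_pos (pow_pos (one_add_exp_pos y) 2), div_le_iff₀
    (pow_pos (one_add_exp_pos y) 2), abs_le]
  have := Real.exp_pos y
  constructor <;> nlinarith

lemma abs_lw3_le {a b : ℝ} (hab : a < b) (y : ℝ) : |lw3 a b y| ≤ 4 * lw a b y := by
  have h : lw3 a b y = lw a b y *
      ((1 - 11 * Real.exp y + 11 * Real.exp y ^ 2 - Real.exp y ^ 3)
      / (1 + Real.exp y) ^ 3) := by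
    unfold lw lw3; field_simp
  rw [h]
  refine ratio_le hab y (by norm_num) ?_
  rw [abs_div, abs_of_pos (pow_pos (one_add_exp_pos y) 3), div_le_iff₀
    (pow_pos (one_add_exp_pos y) 3), abs_le]
  have := Real.exp_pos y
  constructor <;> nlinarith [pow_pos (Real.exp_pos y) 2, pow_pos (Real.exp_pos y) 3]

lemma abs_lw4_le {a b : ℝ} (hab : a < b) (y : ℝ) : |lw4 a b y| ≤ 11 * lw a b y := by
  have h : lw4 a b y = lw a b y *
      ((1 - 26 * Real.exp y + 66 * Real.exp y ^ 2 - 26 * Real.exp y ^ 3 + Real.exp y ^ 4)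
      / (1 + Real.exp y) ^ 4) := by
    unfold lw lw4; field_simp
  rw [h]
  refine ratio_le hab y (by norm_num) ?_
  rw [abs_div, abs_of_pos (pow_pos (one_add_exp_pos y) 4), div_le_iff₀
    (pow_pos (one_add_exp_pos y) 4), abs_le]
  have := Real.exp_pos y
  constructor <;>
    nlinarith [pow_pos (Real.exp_pos y) 2, pow_pos (Real.exp_pos y) 3,
      pow_pos (Real.exp_pos y) 4]

lemma lg_mem {a b : ℝ} (hab : a < b) (y : ℝ) : lg a b y ∈ Ioo a b := by
  have he := Real.exp_pos y
  have h1 := one_add_exp_pos y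
  constructor
  · rw [lg, lt_div_iff₀ h1]; nlinarith
  · rw [lg, div_lt_iff₀ h1]; nlinarith

lemma lg_strictMono {a b : ℝ} (hab : a < b) : StrictMono (lg a b) :=
  strictMono_of_deriv_pos fun y => by
    rw [(hasDerivAt_lg a b y).deriv]; exact lw_pos hab y

lemma lg_image_univ {a b : ℝ} (hab : a < b) : lg a b '' univ = Ioo a b := by
  rw [image_univ]
  ext x
  constructor
  · rintro ⟨y, rfl⟩; exact lg_mem hab y
  · rintro ⟨hx1, hx2⟩
    refine ⟨Real.log ((x - a) / (b - x)), ?_⟩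
    have hba : 0 < b - x := by linarith
    have hxa : 0 < x - a := by linarith
    have hexp : Real.exp (Real.log ((x - a) / (b - x))) = (x - a) / (b - x) :=
      Real.exp_log (by positivity)
    rw [lg, hexp, div_eq_iff (by positivity)]
    field_simp
    ring

lemma integrable_pullback {a b : ℝ} (hab : a < b) {p : ℝ → ℝ}
    (hp : IntegrableOn p (Ioo a b)) :
    Integrable (fun y => lw a b y * p (lg a b y)) volume := by
  have h := (integrableOn_image_iff_integrableOn_abs_deriv_smul MeasurableSet.univ
    (fun y _ => (hasDerivAt_lg a b y).hasDerivWithinAt)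
    ((lg_strictMono hab).injective.injOn) p).mp (by rwa [lg_image_univ hab])
  rw [integrableOn_univ] at h
  refine h.congr (Filter.Eventually.of_forall fun y => ?_)
  simp [smul_eq_mul, abs_of_pos (lw_pos hab y)]

lemma ae_pullback {a b : ℝ} (hab : a < b) {S : Set ℝ}
    (hS : ∀ᵐ x ∂(volume : Measure ℝ), x ∈ Ioo a b → x ∈ S) :
    ∀ᵐ y ∂(volume : Measure ℝ), lg a b y ∈ S := by
  set N : Set ℝ := {x | ¬ (x ∈ Ioo a b → x ∈ S)} with hN
  have hN0 : volume N = 0 := hS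
  obtain ⟨M, hNM, hMmeas, hM0⟩ := exists_measurable_superset_of_null hN0
  set t : Set ℝ := lg a b ⁻¹' M with ht
  have hlgmeas : Measurable (lg a b) := by unfold lg; fun_prop
  have htmeas : MeasurableSet t := hMmeas.preimage hlgmeas
  have himage : ∫⁻ x in lg a b '' t, (1:ENNReal) =
      ∫⁻ y in t, ENNReal.ofReal |(ContinuousLinearMap.smulRight (1 : ℝ →L[ℝ] ℝ)
        (lw a b y)).det| * 1 :=
    lintegral_image_eq_lintegral_abs_det_fderiv_mul volume htmeas
      (fun y _ => ((hasDerivAt_lg a b y).hasFDerivAt).hasFDerivWithinAt)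
      ((lg_strictMono hab).injective.injOn.mono (subset_univ t)) 1
  have hLHS : ∫⁻ x in lg a b '' t, (1:ENNReal) = 0 := by
    rw [setLIntegral_one]
    exact measure_mono_null (image_preimage_subset _ _) hM0
  rw [hLHS] at himage
  have hlwmeas : Measurable (lw a b) := by unfold lw; fun_prop
  have hzero : ∀ᵐ y ∂(volume.restrict t),
      ENNReal.ofReal |(ContinuousLinearMap.smulRight (1 : ℝ →L[ℝ] ℝ) (lw a b y)).det| * 1
        = 0 := by
    have hmeas : AEMeasurable (fun y => ENNReal.ofReal
        |(ContinuousLinearMap.smulRight (1 : ℝ →L[ℝ] ℝ) (lw a b y)).det| * 1)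
        (volume.restrict t) := by
      simp only [ContinuousLinearMap.det_smulRight, ContinuousLinearMap.one_apply, one_mul, mul_one]
      exact (ENNReal.measurable_ofReal.comp (measurable_abs.comp hlwmeas)).aemeasurable
    have hg := (lintegral_eq_zero_iff' hmeas).mp himage.symm
    filter_upwards [hg] with y hy using hy
  have htnull : ∀ᵐ y ∂(volume : Measure ℝ), y ∉ t := by
    filter_upwards [(ae_restrict_iff' htmeas).mp hzero] with y hy
    intro hyt
    have h0 := hy hyt
    rw [ContinuousLinearMap.det_smulRight, ContinuousLinearMap.one_apply, one_mul, mul_one, ENNReal.ofReal_eq_zero] at h0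
    have h1 : 0 < |lw a b y| := abs_pos.mpr (lw_pos hab y).ne'
    linarith
  filter_upwards [htnull] with y hy
  by_contra h
  exact hy (hNM (by simp only [hN, mem_setOf_eq]; intro h2; exact h (h2 (lg_mem hab y))))

lemma abs_le_one_add_pow4 (t : ℝ) : |t| ≤ 1 + |t| ^ 4 := by
  rcases le_total |t| 1 with h | h
  · have : (0:ℝ) ≤ |t| ^ 4 := by positivity
    linarith
  · have := le_self_pow₀ h (by norm_num : (4:ℕ) ≠ 0)
    have h0 : (0:ℝ) ≤ 1 := by norm_num
    linarith

lemma integrableOn_self {a b : ℝ} (hab : a < b) {fX : ℝ → ℝ}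
    (hpos : ∀ x ∈ Ioo a b, 0 < fX x)
    (hcont : ContinuousOn fX (Ioo a b))
    (hder : ∀ x ∈ Ioo a b, HasDerivAt fX (deriv fX x) x)
    (hcontd : ContinuousOn (deriv fX) (Ioo a b))
    (hm1 : IntegrableOn (fun x => (deriv fX x / fX x) ^ 4 * fX x) (Ioo a b)) :
    IntegrableOn fX (Ioo a b) := by
  set v : ℝ → ℝ := fun x => (fX x) ^ (4⁻¹ : ℝ) with hv
  set dv : ℝ → ℝ := fun x => 4⁻¹ * (fX x) ^ ((4⁻¹ : ℝ) - 1) * deriv fX x with hdvdef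
  have hdv : ∀ x ∈ Ioo a b, HasDerivAt v (dv x) x := fun x hx =>
    (Real.hasDerivAt_rpow_const (p := (4⁻¹ : ℝ)) (Or.inl (hpos x hx).ne')).comp x (hder x hx)
  -- pointwise bound |dv|^4 ≤ integrand of hm1
  have hbound : ∀ x ∈ Ioo a b, |dv x| ^ 4 ≤ (deriv fX x / fX x) ^ 4 * fX x := by
    intro x hx
    have hF := hpos x hx
    have h1 : ((fX x) ^ ((4⁻¹:ℝ) - 1)) ^ (4:ℕ) = ((fX x) ^ (3:ℕ))⁻¹ := by
      rw [← Real.rpow_natCast ((fX x) ^ ((4⁻¹:ℝ) - 1)) 4, ← Real.rpow_mul hF.le]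
      norm_num
    have h2 : |dv x| ^ 4 = dv x ^ 4 := by
      rw [← abs_pow, abs_of_nonneg (by positivity)]
    rw [h2, hdvdef]
    have h3 : (4⁻¹ * (fX x) ^ ((4⁻¹:ℝ) - 1) * deriv fX x) ^ (4:ℕ)
        = (4⁻¹:ℝ)^(4:ℕ) * (((fX x) ^ ((4⁻¹:ℝ) - 1)) ^ (4:ℕ)) * (deriv fX x)^(4:ℕ) := by
      ring
    rw [h3, h1]
    have h4 : (deriv fX x / fX x) ^ 4 * fX x = (deriv fX x)^(4:ℕ) * ((fX x)^(3:ℕ))⁻¹ := by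
      field_simp
    rw [h4]
    have h5 : (0:ℝ) ≤ (deriv fX x)^(4:ℕ) * ((fX x)^(3:ℕ))⁻¹ := by positivity
    nlinarith
  -- dv is integrable on Ioo a b
  have hdvcont : ContinuousOn dv (Ioo a b) := by
    apply ContinuousOn.mul
    · exact (continuousOn_const.mul (hcont.rpow_const fun x hx => Or.inl (hpos x hx).ne'))
    · exact hcontd
  have hdvint : IntegrableOn dv (Ioo a b) := by
    refine Integrable.mono' (g := fun x => 1 + (deriv fX x / fX x) ^ 4 * fX x)
      (by have h := (integrableOn_const (C := (1:ℝ)) measure_Ioo_lt_top.ne).add hm1; exact h)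
      (hdvcont.aestronglyMeasurable measurableSet_Ioo) ?_
    rw [ae_restrict_iff' measurableSet_Ioo]
    refine Filter.Eventually.of_forall fun x hx => ?_
    have := hbound x hx
    have h6 := abs_le_one_add_pow4 (dv x)
    rw [Real.norm_eq_abs]
    linarith
  -- v is bounded on Ioo a b
  set c : ℝ := (a + b) / 2 with hc
  have hcmem : c ∈ Ioo a b := by constructor <;> (rw [hc]; linarith)
  set B : ℝ := v c + ∫ x in Ioo a b, |dv x| with hB
  have hvle : ∀ x ∈ Ioo a b, v x ≤ B := by
    intro x hx
    have hsub : uIcc c x ⊆ Ioo a b := (Set.ordConnected_Ioo).uIcc_subset hcmem hx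
    have hii : IntervalIntegrable dv volume c x :=
      intervalIntegrable_iff.mpr (hdvint.mono_set ((Set.uIoc_subset_uIcc).trans hsub))
    have hftc : ∫ t in c..x, dv t = v x - v c :=
      intervalIntegral.integral_eq_sub_of_hasDerivAt (fun t ht => hdv t (hsub ht)) hii
    have habs : |∫ t in c..x, dv t| ≤ ∫ x in Ioo a b, |dv x| := by
      calc |∫ t in c..x, dv t| ≤ ∫ t in Set.uIoc c x, |dv t| := by
            simpa [Real.norm_eq_abs] using intervalIntegral.norm_integral_le_integral_norm_uIoc
              (f := dv) (μ := volume) (a := c) (b := x)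
        _ ≤ ∫ x in Ioo a b, |dv x| := by
            refine setIntegral_mono_set hdvint.abs ?_ ?_
            · exact Filter.Eventually.of_forall fun t => abs_nonneg _
            · exact HasSubset.Subset.eventuallyLE ((Set.uIoc_subset_uIcc).trans hsub)
    have := abs_le.mp habs
    have h7 : v x - v c ≤ ∫ x in Ioo a b, |dv x| := by rw [← hftc]; linarith [this.2]
    rw [hB]; linarith
  -- conclude
  refine Integrable.mono' (g := fun _ => B ^ 4)
    (integrableOn_const measure_Ioo_lt_top.ne)
    (hcont.aestronglyMeasurable measurableSet_Ioo) ?_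
  rw [ae_restrict_iff' measurableSet_Ioo]
  refine Filter.Eventually.of_forall fun x hx => ?_
  have hF := hpos x hx
  have hfxv : fX x = (v x) ^ (4:ℕ) := by
    rw [hv]
    rw [← Real.rpow_natCast ((fX x) ^ (4⁻¹:ℝ)) 4, ← Real.rpow_mul hF.le]
    norm_num
  rw [Real.norm_eq_abs, abs_of_pos hF, hfxv]
  exact pow_le_pow_left₀ (by positivity) (hvle x hx) 4

lemma abs4 (t : ℝ) : |t| ^ 4 = t ^ 4 := by
  rw [← abs_pow, abs_of_nonneg (by positivity)]

lemma pow4_add_le (x y : ℝ) : (x + y) ^ 4 ≤ 8 * (x ^ 4 + y ^ 4) := by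
  nlinarith [sq_nonneg (x - y), sq_nonneg (x + y), sq_nonneg (x ^ 2 - y ^ 2),
    sq_nonneg (x ^ 2 + y ^ 2), sq_nonneg (x * y)]

lemma pow4_sum4 (x0 x1 x2 x3 : ℝ) :
    (x0 + x1 + x2 + x3) ^ 4 ≤ 64 * (x0 ^ 4 + x1 ^ 4 + x2 ^ 4 + x3 ^ 4) := by
  have h1 : (x0 + x1 + x2 + x3) ^ 4 = ((x0 + x1) + (x2 + x3)) ^ 4 := by ring
  have h2 := pow4_add_le (x0 + x1) (x2 + x3)
  have h3 := pow4_add_le x0 x1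
  have h4 := pow4_add_le x2 x3
  nlinarith

lemma key_ineq {L F M X D1 D2 D3 : ℝ} (hL : 0 < L) (hF : 0 < F)
    (hX : |X| ≤ M * L * (F + |D1| + |D2| + |D3|)) :
    (X / (L * F)) ^ 4 * (L * F) ≤
      64 * M ^ 4 * (L * (F + (D1 / F) ^ 4 * F + (D2 / F) ^ 4 * F + (D3 / F) ^ 4 * F)) := by
  have hLF : 0 < L * F := mul_pos hL hF
  have heq : (X / (L * F)) ^ 4 * (L * F) = X ^ 4 / (L * F) ^ 3 := by
    field_simp
  rw [heq, div_le_iff₀ (by positivity)]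
  have h3 : 64 * M ^ 4 * (L * (F + (D1 / F) ^ 4 * F + (D2 / F) ^ 4 * F + (D3 / F) ^ 4 * F))
      * (L * F) ^ 3 = 64 * M ^ 4 * L ^ 4 * (F ^ 4 + D1 ^ 4 + D2 ^ 4 + D3 ^ 4) := by
    field_simp
  rw [h3]
  have h1 : X ^ 4 ≤ (M * L) ^ 4 * ((F + |D1| + |D2| + |D3|) ^ 4) := by
    calc X ^ 4 = |X| ^ 4 := (abs4 X).symm
      _ ≤ (M * L * (F + |D1| + |D2| + |D3|)) ^ 4 := pow_le_pow_left₀ (abs_nonneg X) hX 4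
      _ = (M * L) ^ 4 * ((F + |D1| + |D2| + |D3|) ^ 4) := by ring
  have h2 : (F + |D1| + |D2| + |D3|) ^ 4 ≤ 64 * (F ^ 4 + D1 ^ 4 + D2 ^ 4 + D3 ^ 4) := by
    have := pow4_sum4 F |D1| |D2| |D3|
    rw [abs4, abs4, abs4] at this
    exact this
  calc X ^ 4 ≤ (M * L) ^ 4 * ((F + |D1| + |D2| + |D3|) ^ 4) := h1
    _ ≤ (M * L) ^ 4 * (64 * (F ^ 4 + D1 ^ 4 + D2 ^ 4 + D3 ^ 4)) :=
        mul_le_mul_of_nonneg_left h2 (by positivity)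
    _ = 64 * M ^ 4 * L ^ 4 * (F ^ 4 + D1 ^ 4 + D2 ^ 4 + D3 ^ 4) := by ring

lemma key_ineq4 {L F M X D1 D2 D3 D4 : ℝ} (hL : 0 < L) (hF : 0 < F) (hM : 0 ≤ M)
    (hX : |X| ≤ M * L * (F + |D1| + |D2| + |D3| + |D4|)) :
    |X / (L * F)| * (L * F) ≤ (64 * M ^ 4 + 4 * M) *
      (L * (F + (D1 / F) ^ 4 * F + (D2 / F) ^ 4 * F + (D3 / F) ^ 4 * F + |D4 / F| * F)) := by
  have hLF : 0 < L * F := mul_pos hL hF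
  have h0 : |X / (L * F)| * (L * F) = |X| := by
    rw [abs_div, abs_of_pos hLF]; field_simp
  rw [h0]
  have hDle : ∀ D : ℝ, |D| ≤ F + (D / F) ^ 4 * F := by
    intro D
    have h := abs_le_one_add_pow4 (D / F)
    have h2 : |D| = |D / F| * F := by rw [abs_div, abs_of_pos hF]; field_simp
    have h3 : |D / F| ^ 4 = (D / F) ^ 4 := abs4 _
    rw [h2]
    nlinarith [mul_le_mul_of_nonneg_right h hF.le]
  have hD4' : |D4| = |D4 / F| * F := by rw [abs_div, abs_of_pos hF]; field_simp
  set T := F + (D1 / F) ^ 4 * F + (D2 / F) ^ 4 * F + (D3 / F) ^ 4 * F + |D4 / F| * F with hT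
  have hq1 : 0 ≤ (D1 / F) ^ 4 * F := by positivity
  have hq2 : 0 ≤ (D2 / F) ^ 4 * F := by positivity
  have hq3 : 0 ≤ (D3 / F) ^ 4 * F := by positivity
  have hq4 : 0 ≤ |D4 / F| * F := by positivity
  have hTnn : 0 ≤ T := by rw [hT]; positivity
  have h5 : F + |D1| + |D2| + |D3| + |D4| ≤ 4 * T := by
    have := hDle D1; have := hDle D2; have := hDle D3
    rw [hT] at *
    linarith [hF.le]
  calc |X| ≤ M * L * (F + |D1| + |D2| + |D3| + |D4|) := hX
    _ ≤ M * L * (4 * T) := mul_le_mul_of_nonneg_left h5 (by positivity)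
    _ ≤ (64 * M ^ 4 + 4 * M) * (L * T) := by
        nlinarith [pow_nonneg hM 4, mul_nonneg hL.le hTnn,
          mul_nonneg (pow_nonneg hM 4) (mul_nonneg hL.le hTnn)]

lemma assemble3' {A0 A1 A2 A3 ML G0 G1 G2 G3 : ℝ} (hG0 : 0 < G0)
    (h0 : |A0| ≤ ML) (h1 : |A1| ≤ ML) (h2 : |A2| ≤ ML) (h3 : |A3| ≤ ML) :
    |A0 * G0 + A1 * G1 + A2 * G2 + A3 * G3| ≤ ML * (G0 + |G1| + |G2| + |G3|) := by
  have t : |A0 * G0 + A1 * G1 + A2 * G2 + A3 * G3|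
      ≤ |A0| * G0 + |A1| * |G1| + |A2| * |G2| + |A3| * |G3| := by
    calc |A0 * G0 + A1 * G1 + A2 * G2 + A3 * G3|
        ≤ |A0 * G0 + A1 * G1 + A2 * G2| + |A3 * G3| := abs_add_le _ _
      _ ≤ |A0 * G0 + A1 * G1| + |A2 * G2| + |A3 * G3| := by
          linarith [abs_add_le (A0 * G0 + A1 * G1) (A2 * G2)]
      _ ≤ |A0 * G0| + |A1 * G1| + |A2 * G2| + |A3 * G3| := by
          linarith [abs_add_le (A0 * G0) (A1 * G1)]
      _ = |A0| * G0 + |A1| * |G1| + |A2| * |G2| + |A3| * |G3| := by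
          rw [abs_mul, abs_mul, abs_mul, abs_mul, abs_of_pos hG0]
  refine t.trans ?_
  have e : ML * (G0 + |G1| + |G2| + |G3|)
      = ML * G0 + ML * |G1| + ML * |G2| + ML * |G3| := by ring
  rw [e]
  exact add_le_add (add_le_add (add_le_add
    (mul_le_mul_of_nonneg_right h0 hG0.le)
    (mul_le_mul_of_nonneg_right h1 (abs_nonneg _)))
    (mul_le_mul_of_nonneg_right h2 (abs_nonneg _)))
    (mul_le_mul_of_nonneg_right h3 (abs_nonneg _))

lemma assemble4 {A0 A1 A2 A3 A4 ML G0 G1 G2 G3 G4 : ℝ} (hG0 : 0 < G0)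
    (h0 : |A0| ≤ ML) (h1 : |A1| ≤ ML) (h2 : |A2| ≤ ML) (h3 : |A3| ≤ ML) (h4 : |A4| ≤ ML) :
    |A0 * G0 + A1 * G1 + A2 * G2 + A3 * G3 + A4 * G4|
      ≤ ML * (G0 + |G1| + |G2| + |G3| + |G4|) := by
  have t : |A0 * G0 + A1 * G1 + A2 * G2 + A3 * G3 + A4 * G4|
      ≤ |A0| * G0 + |A1| * |G1| + |A2| * |G2| + |A3| * |G3| + |A4| * |G4| := by
    calc |A0 * G0 + A1 * G1 + A2 * G2 + A3 * G3 + A4 * G4|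
        ≤ |A0 * G0 + A1 * G1 + A2 * G2 + A3 * G3| + |A4 * G4| := abs_add_le _ _
      _ ≤ |A0 * G0 + A1 * G1 + A2 * G2| + |A3 * G3| + |A4 * G4| := by
          linarith [abs_add_le (A0 * G0 + A1 * G1 + A2 * G2) (A3 * G3)]
      _ ≤ |A0 * G0 + A1 * G1| + |A2 * G2| + |A3 * G3| + |A4 * G4| := by
          linarith [abs_add_le (A0 * G0 + A1 * G1) (A2 * G2)]
      _ ≤ |A0 * G0| + |A1 * G1| + |A2 * G2| + |A3 * G3| + |A4 * G4| := by
          linarith [abs_add_le (A0 * G0) (A1 * G1)]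
      _ = |A0| * G0 + |A1| * |G1| + |A2| * |G2| + |A3| * |G3| + |A4| * |G4| := by
          rw [abs_mul, abs_mul, abs_mul, abs_mul, abs_mul, abs_of_pos hG0]
  refine t.trans ?_
  have e : ML * (G0 + |G1| + |G2| + |G3| + |G4|)
      = ML * G0 + ML * |G1| + ML * |G2| + ML * |G3| + ML * |G4| := by ring
  rw [e]
  exact add_le_add (add_le_add (add_le_add (add_le_add
    (mul_le_mul_of_nonneg_right h0 hG0.le)
    (mul_le_mul_of_nonneg_right h1 (abs_nonneg _)))
    (mul_le_mul_of_nonneg_right h2 (abs_nonneg _)))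
    (mul_le_mul_of_nonneg_right h3 (abs_nonneg _)))
    (mul_le_mul_of_nonneg_right h4 (abs_nonneg _))

lemma cb {A c L M : ℝ} (h : |A| ≤ c * L) (hcM : c ≤ M) (hL : 0 ≤ L) : |A| ≤ M * L :=
  h.trans (mul_le_mul_of_nonneg_right hcM hL)


end TDMC

open TDMC Set

set_option maxHeartbeats 1000000 in

/-- If `f_X` is positive with three continuous derivatives on `(a,b)`, its fourth
derivative exists a.e. on `(a,b)`, and `f_X` satisfies the four moment conditions
`∫_a^b (f_X⁽ᵏ⁾/f_X)⁴ f_X < ∞` for `k = 1,2,3` and `∫_a^b |f_X''''/f_X| f_X < ∞`, then the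
transformed density `f_Y(y) = (b-a)·(e^y/(1+e^y)²)·f_X((a+b·e^y)/(1+e^y))` satisfies the
corresponding moment conditions on `ℝ`. -/
theorem transformed_density_moment_conditions (a b : ℝ) (hab : a < b)
    (fX fY : ℝ → ℝ)
    (hfY : ∀ y : ℝ, fY y =
      (b - a) * (Real.exp y / (1 + Real.exp y) ^ 2) *
        fX ((a + b * Real.exp y) / (1 + Real.exp y)))
    (hpos : ∀ x ∈ Set.Ioo a b, 0 < fX x)
    (hsmooth : ContDiffOn ℝ 3 fX (Set.Ioo a b))
    (h4 : ∀ᵐ x ∂volume, x ∈ Set.Ioo a b → DifferentiableAt ℝ (iteratedDeriv 3 fX) x)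
    (hm1 : IntegrableOn (fun x => (deriv fX x / fX x) ^ 4 * fX x) (Set.Ioo a b))
    (hm2 : IntegrableOn (fun x => (iteratedDeriv 2 fX x / fX x) ^ 4 * fX x) (Set.Ioo a b))
    (hm3 : IntegrableOn (fun x => (iteratedDeriv 3 fX x / fX x) ^ 4 * fX x) (Set.Ioo a b))
    (hm4 : IntegrableOn (fun x => |iteratedDeriv 4 fX x / fX x| * fX x) (Set.Ioo a b)) :
    Integrable (fun y => (deriv fY y / fY y) ^ 4 * fY y) volume ∧
    Integrable (fun y => (iteratedDeriv 2 fY y / fY y) ^ 4 * fY y) volume ∧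
    Integrable (fun y => (iteratedDeriv 3 fY y / fY y) ^ 4 * fY y) volume ∧
    Integrable (fun y => |iteratedDeriv 4 fY y / fY y| * fY y) volume := by
  -- constants
  set W : ℝ := (b - a) / 4 with hWdef
  have hWpos : 0 < W := by rw [hWdef]; linarith
  set M : ℝ := 11 + 40 * W + 35 * W ^ 2 + 10 * W ^ 3 + W ^ 4 with hMdef
  have hMpos : 0 < M := by rw [hMdef]; positivity
  set K : ℝ := 64 * M ^ 4 + 4 * M with hKdef
  -- fY as a composition
  have hfYeq : fY = fun y => lw a b y * fX (lg a b y) := by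
    funext y; rw [hfY y]; unfold lw lg; ring
  -- derivative bookkeeping for fX
  have hd2 : iteratedDeriv 2 fX = deriv (deriv fX) := by
    rw [iteratedDeriv_succ, iteratedDeriv_one]
  have hd3 : iteratedDeriv 3 fX = deriv (iteratedDeriv 2 fX) := iteratedDeriv_succ
  have hd4 : iteratedDeriv 4 fX = deriv (iteratedDeriv 3 fX) := iteratedDeriv_succ
  have hC2 : ContDiffOn ℝ 2 (deriv fX) (Set.Ioo a b) :=
    hsmooth.deriv_of_isOpen isOpen_Ioo (by norm_num)
  have hC1 : ContDiffOn ℝ 1 (iteratedDeriv 2 fX) (Set.Ioo a b) := by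
    rw [hd2]; exact hC2.deriv_of_isOpen isOpen_Ioo (by norm_num)
  have hC0 : ContDiffOn ℝ 0 (iteratedDeriv 3 fX) (Set.Ioo a b) := by
    rw [hd3]; exact hC1.deriv_of_isOpen isOpen_Ioo (by norm_num)
  have hcont0 : ContinuousOn fX (Set.Ioo a b) := hsmooth.continuousOn
  have hcont1 : ContinuousOn (deriv fX) (Set.Ioo a b) := hC2.continuousOn
  have hcont2 : ContinuousOn (iteratedDeriv 2 fX) (Set.Ioo a b) := hC1.continuousOn
  have hcont3 : ContinuousOn (iteratedDeriv 3 fX) (Set.Ioo a b) := hC0.continuousOn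
  have hder0 : ∀ x ∈ Set.Ioo a b, HasDerivAt fX (deriv fX x) x := fun x hx =>
    ((hsmooth.differentiableOn (by norm_num)).differentiableAt
      (isOpen_Ioo.mem_nhds hx)).hasDerivAt
  have hder1 : ∀ x ∈ Set.Ioo a b, HasDerivAt (deriv fX) (iteratedDeriv 2 fX x) x := by
    intro x hx
    rw [hd2]
    exact ((hC2.differentiableOn (by norm_num)).differentiableAt
      (isOpen_Ioo.mem_nhds hx)).hasDerivAt
  have hder2 : ∀ x ∈ Set.Ioo a b,
      HasDerivAt (iteratedDeriv 2 fX) (iteratedDeriv 3 fX x) x := by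
    intro x hx
    rw [hd3]
    exact ((hC1.differentiableOn (by norm_num)).differentiableAt
      (isOpen_Ioo.mem_nhds hx)).hasDerivAt
  -- compositions with lg
  have hcomp0 : ∀ y, HasDerivAt (fun z => fX (lg a b z))
      (deriv fX (lg a b y) * lw a b y) y := fun y => by
    simpa [Function.comp_def] using
      (hder0 _ (lg_mem hab y)).comp y (hasDerivAt_lg a b y)
  have hcomp1 : ∀ y, HasDerivAt (fun z => deriv fX (lg a b z))
      (iteratedDeriv 2 fX (lg a b y) * lw a b y) y := fun y => by
    simpa [Function.comp_def] using
      (hder1 _ (lg_mem hab y)).comp y (hasDerivAt_lg a b y)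
  have hcomp2 : ∀ y, HasDerivAt (fun z => iteratedDeriv 2 fX (lg a b z))
      (iteratedDeriv 3 fX (lg a b y) * lw a b y) y := fun y => by
    simpa [Function.comp_def] using
      (hder2 _ (lg_mem hab y)).comp y (hasDerivAt_lg a b y)
  -- explicit derivatives of fY
  set F1 : ℝ → ℝ := fun z => lw1 a b z * fX (lg a b z)
    + lw a b z ^ 2 * deriv fX (lg a b z) with hF1def
  set F2 : ℝ → ℝ := fun z => lw2 a b z * fX (lg a b z)
    + 3 * (lw a b z * lw1 a b z) * deriv fX (lg a b z)
    + lw a b z ^ 3 * iteratedDeriv 2 fX (lg a b z) with hF2def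
  set F3 : ℝ → ℝ := fun z => lw3 a b z * fX (lg a b z)
    + (4 * (lw a b z * lw2 a b z) + 3 * lw1 a b z ^ 2) * deriv fX (lg a b z)
    + 6 * (lw a b z ^ 2 * lw1 a b z) * iteratedDeriv 2 fX (lg a b z)
    + lw a b z ^ 4 * iteratedDeriv 3 fX (lg a b z) with hF3def
  set F4 : ℝ → ℝ := fun z => lw4 a b z * fX (lg a b z)
    + (5 * (lw a b z * lw3 a b z) + 10 * (lw1 a b z * lw2 a b z)) * deriv fX (lg a b z)
    + (10 * (lw a b z ^ 2 * lw2 a b z) + 15 * (lw a b z * lw1 a b z ^ 2))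
        * iteratedDeriv 2 fX (lg a b z)
    + 10 * (lw a b z ^ 3 * lw1 a b z) * iteratedDeriv 3 fX (lg a b z)
    + lw a b z ^ 5 * iteratedDeriv 4 fX (lg a b z) with hF4def
  have hF1 : ∀ y, HasDerivAt fY (F1 y) y := by
    intro y
    rw [hfYeq]
    refine ((hasDerivAt_lw a b y).mul (hcomp0 y)).congr_deriv ?_
    simp only [hF1def]; ring
  have hderivfY : deriv fY = F1 := funext fun y => (hF1 y).deriv
  have hF2 : ∀ y, HasDerivAt F1 (F2 y) y := by
    intro y
    rw [hF1def]
    refine (((hasDerivAt_lw1 a b y).mul (hcomp0 y)).add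
      (((hasDerivAt_lw a b y).pow 2).mul (hcomp1 y))).congr_deriv ?_
    simp only [hF2def, Pi.mul_apply, Pi.add_apply, Pi.sub_apply, Pi.pow_apply]; ring
  have hit2Y : iteratedDeriv 2 fY = F2 := by
    funext y
    have e : iteratedDeriv 2 fY = deriv (iteratedDeriv 1 fY) := iteratedDeriv_succ
    rw [e, iteratedDeriv_one, hderivfY]
    exact (hF2 y).deriv
  have hF3 : ∀ y, HasDerivAt F2 (F3 y) y := by
    intro y
    rw [hF2def]
    refine ((((hasDerivAt_lw2 a b y).mul (hcomp0 y)).add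
      ((((hasDerivAt_lw a b y).mul (hasDerivAt_lw1 a b y)).const_mul 3).mul
        (hcomp1 y))).add
      (((hasDerivAt_lw a b y).pow 3).mul (hcomp2 y))).congr_deriv ?_
    simp only [hF3def, Pi.mul_apply, Pi.add_apply, Pi.sub_apply, Pi.pow_apply]; ring
  have hit3Y : iteratedDeriv 3 fY = F3 := by
    funext y
    have e : iteratedDeriv 3 fY = deriv (iteratedDeriv 2 fY) := iteratedDeriv_succ
    rw [e, hit2Y]
    exact (hF3 y).deriv
  have hit4Y : iteratedDeriv 4 fY = deriv (iteratedDeriv 3 fY) := iteratedDeriv_succ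
  have hae4 : ∀ᵐ y ∂(volume : Measure ℝ), iteratedDeriv 4 fY y = F4 y := by
    have hS := ae_pullback hab (S := {x | DifferentiableAt ℝ (iteratedDeriv 3 fX) x}) h4
    filter_upwards [hS] with y hy
    have had3 : HasDerivAt (iteratedDeriv 3 fX) (iteratedDeriv 4 fX (lg a b y))
        (lg a b y) := by
      rw [hd4]; exact hy.hasDerivAt
    have hc3 : HasDerivAt (fun z => iteratedDeriv 3 fX (lg a b z))
        (iteratedDeriv 4 fX (lg a b y) * lw a b y) y := by
      simpa [Function.comp_def] using had3.comp y (hasDerivAt_lg a b y)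
    have hF4y : HasDerivAt F3 (F4 y) y := by
      rw [hF3def]
      refine (((((hasDerivAt_lw3 a b y).mul (hcomp0 y)).add
        (((((hasDerivAt_lw a b y).mul (hasDerivAt_lw2 a b y)).const_mul 4).add
          (((hasDerivAt_lw1 a b y).pow 2).const_mul 3)).mul (hcomp1 y))).add
        (((((hasDerivAt_lw a b y).pow 2).mul (hasDerivAt_lw1 a b y)).const_mul 6).mul
          (hcomp2 y))).add
        (((hasDerivAt_lw a b y).pow 4).mul hc3)).congr_deriv ?_
      simp only [hF4def, Pi.mul_apply, Pi.add_apply, Pi.sub_apply, Pi.pow_apply]; ring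
    rw [hit4Y, hit3Y]
    exact hF4y.deriv
  -- positivity
  have hG0pos : ∀ y, 0 < fX (lg a b y) := fun y => hpos _ (lg_mem hab y)
  have hfYy : ∀ y, fY y = lw a b y * fX (lg a b y) := fun y => by rw [hfYeq]
  have hfYpos : ∀ y, 0 < fY y := fun y => by
    rw [hfYy y]; exact mul_pos (lw_pos hab y) (hG0pos y)
  -- dominating function
  have hfXint : IntegrableOn fX (Set.Ioo a b) :=
    integrableOn_self hab hpos hcont0 hder0 hcont1 hm1
  set P : ℝ → ℝ := fun x => fX x + (deriv fX x / fX x) ^ 4 * fX x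
    + (iteratedDeriv 2 fX x / fX x) ^ 4 * fX x
    + (iteratedDeriv 3 fX x / fX x) ^ 4 * fX x
    + |iteratedDeriv 4 fX x / fX x| * fX x with hPdef
  have hPint : IntegrableOn P (Set.Ioo a b) := by
    have h := (((hfXint.add hm1).add hm2).add hm3).add hm4
    exact h.congr (Filter.Eventually.of_forall fun x => by
      simp only [Pi.add_apply, hPdef])
  have hdom : Integrable (fun y => K * (lw a b y * P (lg a b y))) volume :=
    (integrable_pullback hab hPint).const_mul K
  -- coefficient bounds (uniform in y)
  have hM11 : (11:ℝ) ≤ M := by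
    rw [hMdef]; nlinarith [hWpos, pow_pos hWpos 2, pow_pos hWpos 3, pow_pos hWpos 4]
  have hM40W : 40 * W ≤ M := by
    rw [hMdef]; nlinarith [hWpos, pow_pos hWpos 2, pow_pos hWpos 3, pow_pos hWpos 4]
  have hM35W2 : 35 * W ^ 2 ≤ M := by
    rw [hMdef]; nlinarith [hWpos, pow_pos hWpos 2, pow_pos hWpos 3, pow_pos hWpos 4]
  have hM10W3 : 10 * W ^ 3 ≤ M := by
    rw [hMdef]; nlinarith [hWpos, pow_pos hWpos 2, pow_pos hWpos 3, pow_pos hWpos 4]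
  have hMW4 : W ^ 4 ≤ M := by
    rw [hMdef]; nlinarith [hWpos, pow_pos hWpos 2, pow_pos hWpos 3, pow_pos hWpos 4]
  have hcoefs : ∀ y, |lw1 a b y| ≤ M * lw a b y ∧ |lw a b y ^ 2| ≤ M * lw a b y ∧
      |lw2 a b y| ≤ M * lw a b y ∧ |3 * (lw a b y * lw1 a b y)| ≤ M * lw a b y ∧
      |lw a b y ^ 3| ≤ M * lw a b y ∧ |lw3 a b y| ≤ M * lw a b y ∧
      |4 * (lw a b y * lw2 a b y) + 3 * lw1 a b y ^ 2| ≤ M * lw a b y ∧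
      |6 * (lw a b y ^ 2 * lw1 a b y)| ≤ M * lw a b y ∧
      |lw a b y ^ 4| ≤ M * lw a b y ∧ |lw4 a b y| ≤ M * lw a b y ∧
      |5 * (lw a b y * lw3 a b y) + 10 * (lw1 a b y * lw2 a b y)| ≤ M * lw a b y ∧
      |10 * (lw a b y ^ 2 * lw2 a b y) + 15 * (lw a b y * lw1 a b y ^ 2)|
        ≤ M * lw a b y ∧
      |10 * (lw a b y ^ 3 * lw1 a b y)| ≤ M * lw a b y ∧
      |lw a b y ^ 5| ≤ M * lw a b y := by
    intro y
    have hL : 0 < lw a b y := lw_pos hab y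
    have hLW : lw a b y ≤ W := by rw [hWdef]; exact lw_le hab y
    have hw1 := abs_lw1_le hab y
    have hw2 := abs_lw2_le hab y
    have hw3 := abs_lw3_le hab y
    have hw4 := abs_lw4_le hab y
    set L := lw a b y with hLdef
    have hLpow : ∀ n : ℕ, L ^ n * L ≤ W ^ n * L := fun n =>
      mul_le_mul_of_nonneg_right (pow_le_pow_left₀ hL.le hLW n) hL.le
    have hL2 : L ^ 2 ≤ W * L := by
      calc L ^ 2 = L ^ 1 * L := by ring
        _ ≤ W ^ 1 * L := hLpow 1
        _ = W * L := by ring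
    have hL3 : L ^ 3 ≤ W ^ 2 * L := by
      calc L ^ 3 = L ^ 2 * L := by ring
        _ ≤ W ^ 2 * L := hLpow 2
    have hL4 : L ^ 4 ≤ W ^ 3 * L := by
      calc L ^ 4 = L ^ 3 * L := by ring
        _ ≤ W ^ 3 * L := hLpow 3
    have hL5 : L ^ 5 ≤ W ^ 4 * L := by
      calc L ^ 5 = L ^ 4 * L := by ring
        _ ≤ W ^ 4 * L := hLpow 4
    refine ⟨cb hw1 (by linarith) hL.le, ?_, cb hw2 (by linarith) hL.le, ?_, ?_,
      cb hw3 (by linarith) hL.le, ?_, ?_, ?_, cb hw4 (by linarith) hL.le, ?_, ?_, ?_, ?_⟩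
    · refine cb (c := W) ?_ (by linarith) hL.le
      rw [abs_of_pos (pow_pos hL 2)]; nlinarith
    · refine cb (c := 3 * W) ?_ (by linarith) hL.le
      simp only [abs_mul, abs_of_pos hL, Nat.abs_ofNat]
      nlinarith [abs_nonneg (lw1 a b y)]
    · refine cb (c := W ^ 2) ?_ (by linarith) hL.le
      rw [abs_of_pos (pow_pos hL 3)]; nlinarith
    · refine cb (c := 11 * W) ?_ (by linarith) hL.le
      refine (abs_add_le (4 * (L * lw2 a b y)) (3 * lw1 a b y ^ 2)).trans ?_
      simp only [abs_mul, abs_pow, abs_of_pos hL, Nat.abs_ofNat]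
      nlinarith [abs_nonneg (lw1 a b y), abs_nonneg (lw2 a b y),
        mul_le_mul hw1 hw1 (abs_nonneg _) (by positivity),
        mul_le_mul_of_nonneg_left hw2 (by positivity : (0:ℝ) ≤ 4 * L)]
    · refine cb (c := 6 * W ^ 2) ?_ (by linarith) hL.le
      simp only [abs_mul, abs_pow, abs_of_pos hL, Nat.abs_ofNat]
      nlinarith [abs_nonneg (lw1 a b y), mul_le_mul hLW hLW hL.le hWpos.le,
        mul_le_mul_of_nonneg_left hw1 (by positivity : (0:ℝ) ≤ 6 * L ^ 2)]
    · refine cb (c := W ^ 3) ?_ (by linarith) hL.le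
      rw [abs_of_pos (pow_pos hL 4)]; nlinarith
    · refine cb (c := 40 * W) ?_ (by linarith) hL.le
      refine (abs_add_le (5 * (L * lw3 a b y)) (10 * (lw1 a b y * lw2 a b y))).trans ?_
      simp only [abs_mul, abs_of_pos hL, Nat.abs_ofNat]
      nlinarith [abs_nonneg (lw1 a b y), abs_nonneg (lw2 a b y), abs_nonneg (lw3 a b y),
        mul_le_mul hw1 hw2 (abs_nonneg _) (by positivity),
        mul_le_mul_of_nonneg_left hw3 (by positivity : (0:ℝ) ≤ 5 * L)]
    · refine cb (c := 35 * W ^ 2) ?_ (by linarith) hL.le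
      refine (abs_add_le (10 * (L ^ 2 * lw2 a b y)) (15 * (L * lw1 a b y ^ 2))).trans ?_
      simp only [abs_mul, abs_pow, abs_of_pos hL, Nat.abs_ofNat]
      nlinarith [abs_nonneg (lw1 a b y), abs_nonneg (lw2 a b y),
        mul_le_mul hw1 hw1 (abs_nonneg _) (by positivity),
        mul_le_mul_of_nonneg_left hw2 (by positivity : (0:ℝ) ≤ 10 * L ^ 2),
        mul_le_mul hLW hLW hL.le hWpos.le]
    · refine cb (c := 10 * W ^ 3) ?_ (by linarith) hL.le
      simp only [abs_mul, abs_pow, abs_of_pos hL, Nat.abs_ofNat]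
      nlinarith [mul_le_mul_of_nonneg_left hw1 (by positivity : (0:ℝ) ≤ 10 * L ^ 3)]
    · refine cb (c := W ^ 4) ?_ (by linarith) hL.le
      rw [abs_of_pos (pow_pos hL 5)]; nlinarith
  -- the uniform pointwise bounds
  have hXb1 : ∀ y, |F1 y| ≤ M * lw a b y * (fX (lg a b y) + |deriv fX (lg a b y)|
      + |iteratedDeriv 2 fX (lg a b y)| + |iteratedDeriv 3 fX (lg a b y)|) := by
    intro y
    obtain ⟨h1, h2, _⟩ := hcoefs y
    have e : F1 y = lw1 a b y * fX (lg a b y) + lw a b y ^ 2 * deriv fX (lg a b y)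
        + 0 * iteratedDeriv 2 fX (lg a b y) + 0 * iteratedDeriv 3 fX (lg a b y) := by
      simp only [hF1def]; ring
    rw [e]
    have hz : |(0:ℝ)| ≤ M * lw a b y := by
      rw [abs_zero]; exact mul_nonneg hMpos.le (lw_pos hab y).le
    exact assemble3' (hG0pos y) h1 h2 hz hz
  have hXb2 : ∀ y, |F2 y| ≤ M * lw a b y * (fX (lg a b y) + |deriv fX (lg a b y)|
      + |iteratedDeriv 2 fX (lg a b y)| + |iteratedDeriv 3 fX (lg a b y)|) := by
    intro y
    obtain ⟨_, _, h3, h4, h5, _⟩ := hcoefs y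
    have e : F2 y = lw2 a b y * fX (lg a b y)
        + 3 * (lw a b y * lw1 a b y) * deriv fX (lg a b y)
        + lw a b y ^ 3 * iteratedDeriv 2 fX (lg a b y)
        + 0 * iteratedDeriv 3 fX (lg a b y) := by
      simp only [hF2def]; ring
    rw [e]
    have hz : |(0:ℝ)| ≤ M * lw a b y := by
      rw [abs_zero]; exact mul_nonneg hMpos.le (lw_pos hab y).le
    exact assemble3' (hG0pos y) h3 h4 h5 hz
  have hXb3 : ∀ y, |F3 y| ≤ M * lw a b y * (fX (lg a b y) + |deriv fX (lg a b y)|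
      + |iteratedDeriv 2 fX (lg a b y)| + |iteratedDeriv 3 fX (lg a b y)|) := by
    intro y
    obtain ⟨_, _, _, _, _, h6, h7, h8, h9, _⟩ := hcoefs y
    have e : F3 y = lw3 a b y * fX (lg a b y)
        + (4 * (lw a b y * lw2 a b y) + 3 * lw1 a b y ^ 2) * deriv fX (lg a b y)
        + 6 * (lw a b y ^ 2 * lw1 a b y) * iteratedDeriv 2 fX (lg a b y)
        + lw a b y ^ 4 * iteratedDeriv 3 fX (lg a b y) := by
      simp only [hF3def]
    rw [e]
    exact assemble3' (hG0pos y) h6 h7 h8 h9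
  have hXb4 : ∀ y, |F4 y| ≤ M * lw a b y * (fX (lg a b y) + |deriv fX (lg a b y)|
      + |iteratedDeriv 2 fX (lg a b y)| + |iteratedDeriv 3 fX (lg a b y)|
      + |iteratedDeriv 4 fX (lg a b y)|) := by
    intro y
    obtain ⟨_, _, _, _, _, _, _, _, _, h10, h11, h12, h13, h14⟩ := hcoefs y
    have e : F4 y = lw4 a b y * fX (lg a b y)
        + (5 * (lw a b y * lw3 a b y) + 10 * (lw1 a b y * lw2 a b y))
            * deriv fX (lg a b y)
        + (10 * (lw a b y ^ 2 * lw2 a b y) + 15 * (lw a b y * lw1 a b y ^ 2))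
            * iteratedDeriv 2 fX (lg a b y)
        + 10 * (lw a b y ^ 3 * lw1 a b y) * iteratedDeriv 3 fX (lg a b y)
        + lw a b y ^ 5 * iteratedDeriv 4 fX (lg a b y) := by
      simp only [hF4def]
    rw [e]
    exact assemble4 (hG0pos y) h10 h11 h12 h13 h14
  -- bounds against the dominating function
  have hPval : ∀ y, P (lg a b y) = fX (lg a b y)
      + (deriv fX (lg a b y) / fX (lg a b y)) ^ 4 * fX (lg a b y)
      + (iteratedDeriv 2 fX (lg a b y) / fX (lg a b y)) ^ 4 * fX (lg a b y)
      + (iteratedDeriv 3 fX (lg a b y) / fX (lg a b y)) ^ 4 * fX (lg a b y)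
      + |iteratedDeriv 4 fX (lg a b y) / fX (lg a b y)| * fX (lg a b y) := fun y => by
    simp only [hPdef]
  have hcore : ∀ (X : ℝ) (y : ℝ), |X| ≤ M * lw a b y * (fX (lg a b y)
      + |deriv fX (lg a b y)| + |iteratedDeriv 2 fX (lg a b y)|
      + |iteratedDeriv 3 fX (lg a b y)|) →
      (X / fY y) ^ 4 * fY y ≤ K * (lw a b y * P (lg a b y)) := by
    intro X y hX
    have hL := lw_pos hab y
    have hF := hG0pos y
    have hk := key_ineq (M := M) (D1 := deriv fX (lg a b y))
      (D2 := iteratedDeriv 2 fX (lg a b y)) (D3 := iteratedDeriv 3 fX (lg a b y))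
      hL hF hX
    rw [hfYy y]
    refine hk.trans ?_
    rw [hPval y, hKdef]
    have hq4 : 0 ≤ |iteratedDeriv 4 fX (lg a b y) / fX (lg a b y)| * fX (lg a b y) := by
      positivity
    have hT : 0 ≤ fX (lg a b y)
        + (deriv fX (lg a b y) / fX (lg a b y)) ^ 4 * fX (lg a b y)
        + (iteratedDeriv 2 fX (lg a b y) / fX (lg a b y)) ^ 4 * fX (lg a b y)
        + (iteratedDeriv 3 fX (lg a b y) / fX (lg a b y)) ^ 4 * fX (lg a b y) := by
      positivity
    nlinarith [mul_nonneg (mul_nonneg (pow_pos hMpos 4).le hL.le) hq4,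
      mul_nonneg (mul_nonneg hMpos.le hL.le) hT,
      mul_nonneg (mul_nonneg hMpos.le hL.le) hq4]
  have hcore4 : ∀ (X : ℝ) (y : ℝ), |X| ≤ M * lw a b y * (fX (lg a b y)
      + |deriv fX (lg a b y)| + |iteratedDeriv 2 fX (lg a b y)|
      + |iteratedDeriv 3 fX (lg a b y)| + |iteratedDeriv 4 fX (lg a b y)|) →
      |X / fY y| * fY y ≤ K * (lw a b y * P (lg a b y)) := by
    intro X y hX
    have hL := lw_pos hab y
    have hF := hG0pos y
    have hk := key_ineq4 (M := M) (D1 := deriv fX (lg a b y))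
      (D2 := iteratedDeriv 2 fX (lg a b y)) (D3 := iteratedDeriv 3 fX (lg a b y))
      (D4 := iteratedDeriv 4 fX (lg a b y)) hL hF hMpos.le hX
    rw [hfYy y]
    refine hk.trans ?_
    rw [hPval y, hKdef]
  -- continuity facts
  have hlgc : Continuous (lg a b) := by
    unfold lg
    exact (continuous_const.add (continuous_const.mul Real.continuous_exp)).div
      (continuous_const.add Real.continuous_exp) one_add_exp_ne
  have hcompc : ∀ {φ : ℝ → ℝ}, ContinuousOn φ (Set.Ioo a b) →
      Continuous (fun y => φ (lg a b y)) := by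
    intro φ h
    exact continuous_iff_continuousAt.mpr fun y =>
      (h.continuousAt (isOpen_Ioo.mem_nhds (lg_mem hab y))).comp hlgc.continuousAt
  have hlwc : Continuous (lw a b) := by
    unfold lw
    exact continuous_const.mul (Real.continuous_exp.div
      ((continuous_const.add Real.continuous_exp).pow 2)
      (fun y => pow_ne_zero 2 (one_add_exp_ne y)))
  have hlw1c : Continuous (lw1 a b) := by
    unfold lw1
    exact continuous_const.mul ((Real.continuous_exp.mul
      (continuous_const.sub Real.continuous_exp)).div
      ((continuous_const.add Real.continuous_exp).pow 3)
      (fun y => pow_ne_zero 3 (one_add_exp_ne y)))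
  have hlw2c : Continuous (lw2 a b) := by
    unfold lw2
    exact continuous_const.mul ((Real.continuous_exp.mul
      ((continuous_const.sub (continuous_const.mul Real.continuous_exp)).add
        (Real.continuous_exp.pow 2))).div
      ((continuous_const.add Real.continuous_exp).pow 4)
      (fun y => pow_ne_zero 4 (one_add_exp_ne y)))
  have hlw3c : Continuous (lw3 a b) := by
    unfold lw3
    exact continuous_const.mul ((Real.continuous_exp.mul
      (((continuous_const.sub (continuous_const.mul Real.continuous_exp)).add
        (continuous_const.mul (Real.continuous_exp.pow 2))).sub
        (Real.continuous_exp.pow 3))).div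
      ((continuous_const.add Real.continuous_exp).pow 5)
      (fun y => pow_ne_zero 5 (one_add_exp_ne y)))
  have hfYc : Continuous fY := by
    rw [hfYeq]; exact hlwc.mul (hcompc hcont0)
  have hF1c : Continuous F1 := by
    rw [hF1def]
    exact (hlw1c.mul (hcompc hcont0)).add ((hlwc.pow 2).mul (hcompc hcont1))
  have hF2c : Continuous F2 := by
    rw [hF2def]
    exact ((hlw2c.mul (hcompc hcont0)).add
      ((continuous_const.mul (hlwc.mul hlw1c)).mul (hcompc hcont1))).add
      ((hlwc.pow 3).mul (hcompc hcont2))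
  have hF3c : Continuous F3 := by
    rw [hF3def]
    exact (((hlw3c.mul (hcompc hcont0)).add
      (((continuous_const.mul (hlwc.mul hlw2c)).add
        (continuous_const.mul (hlw1c.pow 2))).mul (hcompc hcont1))).add
      ((continuous_const.mul ((hlwc.pow 2).mul hlw1c)).mul (hcompc hcont2))).add
      ((hlwc.pow 4).mul (hcompc hcont3))
  have hfYne : ∀ y, fY y ≠ 0 := fun y => (hfYpos y).ne'
  -- assemble the four integrability claims
  refine ⟨?_, ?_, ?_, ?_⟩
  · simp only [hderivfY]
    refine hdom.mono' ((((hF1c.div hfYc hfYne).pow 4).mul hfYc).aestronglyMeasurable) ?_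
    refine Filter.Eventually.of_forall fun y => ?_
    rw [Real.norm_eq_abs, abs_of_nonneg (mul_nonneg (by positivity) (hfYpos y).le)]
    exact hcore (F1 y) y (hXb1 y)
  · simp only [hit2Y]
    refine hdom.mono' ((((hF2c.div hfYc hfYne).pow 4).mul hfYc).aestronglyMeasurable) ?_
    refine Filter.Eventually.of_forall fun y => ?_
    rw [Real.norm_eq_abs, abs_of_nonneg (mul_nonneg (by positivity) (hfYpos y).le)]
    exact hcore (F2 y) y (hXb2 y)
  · simp only [hit3Y]
    refine hdom.mono' ((((hF3c.div hfYc hfYne).pow 4).mul hfYc).aestronglyMeasurable) ?_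
    refine Filter.Eventually.of_forall fun y => ?_
    rw [Real.norm_eq_abs, abs_of_nonneg (mul_nonneg (by positivity) (hfYpos y).le)]
    exact hcore (F3 y) y (hXb3 y)
  · refine hdom.mono' ?_ ?_
    · rw [hit4Y]
      exact ((((measurable_deriv _).div hfYc.measurable).abs.mul
        hfYc.measurable).aestronglyMeasurable)
    · filter_upwards [hae4] with y hy
      rw [Real.norm_eq_abs, abs_of_nonneg (mul_nonneg (abs_nonneg _) (hfYpos y).le), hy]
      exact hcore4 (F4 y) y (hXb4 y)
end

section
/- Suppose f_X is positive and twice continuously differentiable on (a,b), and the function z ↦ (log f_X)'(z) is Lipschitz continuous on (a,b). Then the function y ↦ (log f_Y)'(y) is Lipschitz continuous on ℝ. -/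
noncomputable def sigmoidFn (y : ℝ) : ℝ := Real.exp y / (1 + Real.exp y)

lemma sigmoid_pos (y : ℝ) : 0 < sigmoidFn y := by
  unfold sigmoidFn; positivity

lemma sigmoid_lt_one (y : ℝ) : sigmoidFn y < 1 := by
  unfold sigmoidFn
  rw [div_lt_one (by positivity)]
  linarith

lemma sigmoid_mono {x y : ℝ} (h : x ≤ y) : sigmoidFn x ≤ sigmoidFn y := by
  unfold sigmoidFn
  have hx := Real.exp_pos x
  have hy := Real.exp_pos y
  have hxy : Real.exp x ≤ Real.exp y := Real.exp_le_exp.mpr h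
  rw [div_le_div_iff₀ (by positivity) (by positivity)]
  nlinarith

lemma sigmoid_lip_aux {x y : ℝ} (h : x ≤ y) :
    sigmoidFn y - sigmoidFn x ≤ y - x := by
  unfold sigmoidFn
  have hx := Real.exp_pos x
  have hy := Real.exp_pos y
  have key : Real.exp y - Real.exp x ≤ (y - x) * Real.exp y := by
    have h1 : 1 + (x - y) ≤ Real.exp (x - y) := by
      linarith [Real.add_one_le_exp (x - y)]
    have h2 : Real.exp (x - y) * Real.exp y = Real.exp x := by
      rw [← Real.exp_add]; ring_nf
    nlinarith
  have h1 : (0:ℝ) < 1 + Real.exp x := by linarith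
  have h2 : (0:ℝ) < 1 + Real.exp y := by linarith
  rw [div_sub_div _ _ (ne_of_gt h2) (ne_of_gt h1), div_le_iff₀ (by positivity)]
  nlinarith [mul_nonneg (sub_nonneg.mpr h) hx.le, mul_nonneg (sub_nonneg.mpr h) hy.le,
    mul_nonneg (sub_nonneg.mpr h) (mul_pos hx hy).le]

lemma sigmoid_lip (x y : ℝ) : |sigmoidFn x - sigmoidFn y| ≤ |x - y| := by
  rcases le_total x y with h | h
  · rw [abs_sub_comm, abs_sub_comm x y,
      abs_of_nonneg (by linarith [sigmoid_mono h]),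
      abs_of_nonneg (by linarith)]
    exact sigmoid_lip_aux h
  · rw [abs_of_nonneg (by linarith [sigmoid_mono h]),
      abs_of_nonneg (by linarith)]
    exact sigmoid_lip_aux h

lemma sigmoid_hasDerivAt (y : ℝ) :
    HasDerivAt sigmoidFn (sigmoidFn y * (1 - sigmoidFn y)) y := by
  have hy := Real.exp_pos y
  have h1 : HasDerivAt (fun y => 1 + Real.exp y) (Real.exp y) y :=
    (Real.hasDerivAt_exp y).const_add 1
  have h2 : (1 + Real.exp y) ≠ 0 := by positivity
  have := (Real.hasDerivAt_exp y).div h1 h2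
  refine this.congr_deriv ?_
  unfold sigmoidFn
  field_simp

/-- Product of bounded Lipschitz functions is Lipschitz (real-valued, abs form). -/
lemma lipR_mul {f g : ℝ → ℝ} {Kf Kg Cf Cg : ℝ}
    (hf : ∀ x y, |f x - f y| ≤ Kf * |x - y|)
    (hg : ∀ x y, |g x - g y| ≤ Kg * |x - y|)
    (hbf : ∀ x, |f x| ≤ Cf) (hbg : ∀ x, |g x| ≤ Cg) :
    ∀ x y, |f x * g x - f y * g y| ≤ (Kf * Cg + Cf * Kg) * |x - y| := by
  intro x y
  have e : f x * g x - f y * g y = (f x - f y) * g y + f x * (g x - g y) := by ring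
  calc |f x * g x - f y * g y| ≤ |f x - f y| * |g y| + |f x| * |g x - g y| := by
        rw [e]
        exact (abs_add_le _ _).trans (by rw [abs_mul, abs_mul])
    _ ≤ (Kf * |x - y|) * Cg + Cf * (Kg * |x - y|) := by
        have h1 := hf x y; have h2 := hg x y
        have h3 := hbf x; have h4 := hbg y
        have h5 := abs_nonneg (f x - f y); have h6 := abs_nonneg (g x - g y)
        have h7 := abs_nonneg (f x); have h8 := abs_nonneg (g y)
        nlinarith
    _ = (Kf * Cg + Cf * Kg) * |x - y| := by ring

noncomputable def gmap (a b y : ℝ) : ℝ := a + (b - a) * sigmoidFn y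

lemma gmap_mem {a b : ℝ} (hab : a < b) (y : ℝ) : gmap a b y ∈ Set.Ioo a b := by
  unfold gmap
  have h1 := sigmoid_pos y
  have h2 := sigmoid_lt_one y
  constructor <;> nlinarith

lemma gmap_eq {a b : ℝ} (y : ℝ) :
    (a + b * Real.exp y) / (1 + Real.exp y) = gmap a b y := by
  unfold gmap sigmoidFn
  have hy := Real.exp_pos y
  field_simp
  ring

lemma gmap_hasDerivAt (a b y : ℝ) :
    HasDerivAt (gmap a b) ((b - a) * (sigmoidFn y * (1 - sigmoidFn y))) y :=
  ((sigmoid_hasDerivAt y).const_mul (b - a)).const_add a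

/-- If `f_X` is positive and twice continuously differentiable on `(a,b)`, and
`z ↦ (log f_X)'(z)` is Lipschitz continuous on `(a,b)`, then `y ↦ (log f_Y)'(y)` is Lipschitz
continuous on `ℝ`, where `f_Y(y) = (b-a)·(e^y/(1+e^y)²)·f_X((a+b·e^y)/(1+e^y))`. -/
theorem transformed_density_log_deriv_lipschitz (a b : ℝ) (hab : a < b)
    (fX fY : ℝ → ℝ)
    (hfY : ∀ y : ℝ, fY y =
      (b - a) * (Real.exp y / (1 + Real.exp y) ^ 2) *
        fX ((a + b * Real.exp y) / (1 + Real.exp y)))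
    (hpos : ∀ x ∈ Set.Ioo a b, 0 < fX x)
    (hsmooth : ContDiffOn ℝ 2 fX (Set.Ioo a b))
    (hlip : ∃ K : NNReal, LipschitzOnWith K (deriv fun z => Real.log (fX z)) (Set.Ioo a b)) :
    ∃ K : NNReal, LipschitzWith K (deriv fun y => Real.log (fY y)) := by
  obtain ⟨K₀, hK₀⟩ := hlip
  have hK₀' := lipschitzOnWith_iff_dist_le_mul.mp hK₀
  have hba : (0:ℝ) < b - a := by linarith
  -- Notation
  set L : ℝ → ℝ := deriv fun z => Real.log (fX z) with hL
  -- Step 1: rewrite log ∘ fY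
  have hlog : (fun y => Real.log (fY y)) =
      fun y => Real.log (b - a) + (y - 2 * Real.log (1 + Real.exp y))
        + Real.log (fX (gmap a b y)) := by
    funext y
    have hy := Real.exp_pos y
    have h1 : (1:ℝ) + Real.exp y ≠ 0 := by positivity
    have h2 : Real.exp y / (1 + Real.exp y) ^ 2 ≠ 0 := by positivity
    have h3 : fX (gmap a b y) ≠ 0 := ne_of_gt (hpos _ (gmap_mem hab y))
    rw [hfY y, gmap_eq, Real.log_mul (mul_ne_zero (ne_of_gt hba) h2) h3,
      Real.log_mul (ne_of_gt hba) h2, Real.log_div (Real.exp_ne_zero y) (by positivity),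
      Real.log_exp, Real.log_pow]
    push_cast
    ring
  -- Step 2: compute the derivative pointwise
  have hderiv : (deriv fun y => Real.log (fY y)) =
      fun y => 1 - 2 * sigmoidFn y
        + L (gmap a b y) * ((b - a) * (sigmoidFn y * (1 - sigmoidFn y))) := by
    funext y
    rw [hlog]
    have hy := Real.exp_pos y
    have hz : gmap a b y ∈ Set.Ioo a b := gmap_mem hab y
    have hdiff : DifferentiableAt ℝ fX (gmap a b y) := by
      have h := hsmooth.differentiableOn (by norm_num)
      exact h.differentiableAt (isOpen_Ioo.mem_nhds hz)
    have hfx : HasDerivAt (fun z => Real.log (fX z))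
        (deriv fX (gmap a b y) / fX (gmap a b y)) (gmap a b y) :=
      hdiff.hasDerivAt.log (ne_of_gt (hpos _ hz))
    have hφ : HasDerivAt (fun z => Real.log (fX z)) (L (gmap a b y)) (gmap a b y) := by
      rw [hL, hfx.deriv]
      exact hfx
    have hcomp : HasDerivAt (fun y => Real.log (fX (gmap a b y)))
        (L (gmap a b y) * ((b - a) * (sigmoidFn y * (1 - sigmoidFn y)))) y :=
      HasDerivAt.comp y hφ (gmap_hasDerivAt a b y)
    have hlg : HasDerivAt (fun y => Real.log (1 + Real.exp y)) (sigmoidFn y) y :=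
      ((Real.hasDerivAt_exp y).const_add 1).log (by positivity)
    have hsum : HasDerivAt (fun y => Real.log (b - a)
        + (y - 2 * Real.log (1 + Real.exp y)) + Real.log (fX (gmap a b y)))
        (0 + (1 - 2 * sigmoidFn y)
          + L (gmap a b y) * ((b - a) * (sigmoidFn y * (1 - sigmoidFn y)))) y :=
      ((hasDerivAt_const y _).add ((hasDerivAt_id y).sub (hlg.const_mul 2))).add hcomp
    rw [hsum.deriv]
    ring
  rw [hderiv]
  -- Step 3: Lipschitz bounds
  -- basic bounds on sigmoid
  have hσb : ∀ y : ℝ, |sigmoidFn y| ≤ 1 := fun y => by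
    rw [abs_of_nonneg (le_of_lt (sigmoid_pos y))]
    exact le_of_lt (sigmoid_lt_one y)
  have h1σb : ∀ y : ℝ, |1 - sigmoidFn y| ≤ 1 := fun y => by
    rw [abs_of_nonneg (by linarith [sigmoid_lt_one y])]
    linarith [sigmoid_pos y]
  have hσlip : ∀ x y : ℝ, |sigmoidFn x - sigmoidFn y| ≤ 1 * |x - y| := fun x y => by
    rw [one_mul]; exact sigmoid_lip x y
  have h1σlip : ∀ x y : ℝ, |(1 - sigmoidFn x) - (1 - sigmoidFn y)| ≤ 1 * |x - y| := fun x y => by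
    rw [one_mul, abs_sub_comm]
    have : (1 - sigmoidFn y) - (1 - sigmoidFn x) = sigmoidFn x - sigmoidFn y := by ring
    rw [this]; exact sigmoid_lip x y
  -- g is Lipschitz
  have hglip : ∀ x y : ℝ, |gmap a b x - gmap a b y| ≤ (b - a) * |x - y| := fun x y => by
    unfold gmap
    have : a + (b - a) * sigmoidFn x - (a + (b - a) * sigmoidFn y)
        = (b - a) * (sigmoidFn x - sigmoidFn y) := by ring
    rw [this, abs_mul, abs_of_pos hba]
    exact mul_le_mul_of_nonneg_left (sigmoid_lip x y) (le_of_lt hba)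
  -- L ∘ g is Lipschitz
  have hLglip : ∀ x y : ℝ, |L (gmap a b x) - L (gmap a b y)| ≤ ((K₀:ℝ) * (b - a)) * |x - y| := by
    intro x y
    have h := hK₀' _ (gmap_mem hab x) _ (gmap_mem hab y)
    rw [Real.dist_eq, Real.dist_eq] at h
    calc |L (gmap a b x) - L (gmap a b y)| ≤ (K₀:ℝ) * |gmap a b x - gmap a b y| := h
      _ ≤ (K₀:ℝ) * ((b - a) * |x - y|) :=
          mul_le_mul_of_nonneg_left (hglip x y) K₀.coe_nonneg
      _ = ((K₀:ℝ) * (b - a)) * |x - y| := by ring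
  -- L ∘ g is bounded
  set CL : ℝ := |L (gmap a b 0)| + (K₀:ℝ) * (b - a) with hCL
  have hCL0 : 0 ≤ CL := by
    have := abs_nonneg (L (gmap a b 0))
    have := K₀.coe_nonneg
    nlinarith
  have hLgb : ∀ y : ℝ, |L (gmap a b y)| ≤ CL := by
    intro y
    have h := hK₀' _ (gmap_mem hab y) _ (gmap_mem hab 0)
    rw [Real.dist_eq, Real.dist_eq] at h
    have hd : |gmap a b y - gmap a b 0| ≤ b - a := by
      obtain ⟨h1, h2⟩ := gmap_mem hab y
      obtain ⟨h3, h4⟩ := gmap_mem hab 0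
      rw [abs_le]; constructor <;> linarith
    have h2 : |L (gmap a b y) - L (gmap a b 0)| ≤ (K₀:ℝ) * (b - a) :=
      h.trans (mul_le_mul_of_nonneg_left hd K₀.coe_nonneg)
    calc |L (gmap a b y)| ≤ |L (gmap a b y) - L (gmap a b 0)| + |L (gmap a b 0)| := by
          have := abs_sub_abs_le_abs_sub (L (gmap a b y)) (L (gmap a b 0))
          linarith [abs_abs (L (gmap a b 0))]
      _ ≤ CL := by rw [hCL]; linarith
  -- P := σ(1-σ) is Lipschitz (constant 2) and bounded by 1
  have hPlip : ∀ x y : ℝ, |sigmoidFn x * (1 - sigmoidFn x) - sigmoidFn y * (1 - sigmoidFn y)|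
      ≤ (1 * 1 + 1 * 1) * |x - y| :=
    lipR_mul hσlip h1σlip hσb h1σb
  have hPb : ∀ y : ℝ, |sigmoidFn y * (1 - sigmoidFn y)| ≤ 1 := fun y => by
    rw [abs_mul]
    calc |sigmoidFn y| * |1 - sigmoidFn y| ≤ 1 * 1 :=
        mul_le_mul (hσb y) (h1σb y) (abs_nonneg _) zero_le_one
      _ = 1 := one_mul 1
  -- D := (b-a)·σ(1-σ)
  have hDlip : ∀ x y : ℝ, |(b - a) * (sigmoidFn x * (1 - sigmoidFn x))
      - (b - a) * (sigmoidFn y * (1 - sigmoidFn y))| ≤ (2 * (b - a)) * |x - y| := fun x y => by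
    have : (b - a) * (sigmoidFn x * (1 - sigmoidFn x))
        - (b - a) * (sigmoidFn y * (1 - sigmoidFn y))
        = (b - a) * (sigmoidFn x * (1 - sigmoidFn x) - sigmoidFn y * (1 - sigmoidFn y)) := by ring
    rw [this, abs_mul, abs_of_pos hba]
    calc (b - a) * |sigmoidFn x * (1 - sigmoidFn x) - sigmoidFn y * (1 - sigmoidFn y)|
        ≤ (b - a) * ((1 * 1 + 1 * 1) * |x - y|) :=
          mul_le_mul_of_nonneg_left (hPlip x y) (le_of_lt hba)
      _ = (2 * (b - a)) * |x - y| := by ring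
  have hDb : ∀ y : ℝ, |(b - a) * (sigmoidFn y * (1 - sigmoidFn y))| ≤ b - a := fun y => by
    rw [abs_mul, abs_of_pos hba]
    calc (b - a) * |sigmoidFn y * (1 - sigmoidFn y)| ≤ (b - a) * 1 :=
        mul_le_mul_of_nonneg_left (hPb y) (le_of_lt hba)
      _ = b - a := mul_one _
  -- Q := (L∘g)·D is Lipschitz
  set K₂ : ℝ := ((K₀:ℝ) * (b - a)) * (b - a) + CL * (2 * (b - a)) with hK₂
  have hQlip : ∀ x y : ℝ,
      |L (gmap a b x) * ((b - a) * (sigmoidFn x * (1 - sigmoidFn x)))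
        - L (gmap a b y) * ((b - a) * (sigmoidFn y * (1 - sigmoidFn y)))| ≤ K₂ * |x - y| :=
    lipR_mul hLglip hDlip hLgb hDb
  -- final combination
  have hFlip : ∀ x y : ℝ,
      |(1 - 2 * sigmoidFn x + L (gmap a b x) * ((b - a) * (sigmoidFn x * (1 - sigmoidFn x))))
        - (1 - 2 * sigmoidFn y + L (gmap a b y) * ((b - a) * (sigmoidFn y * (1 - sigmoidFn y))))|
      ≤ (2 + K₂) * |x - y| := by
    intro x y
    have e : (1 - 2 * sigmoidFn x + L (gmap a b x) * ((b - a) * (sigmoidFn x * (1 - sigmoidFn x))))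
        - (1 - 2 * sigmoidFn y + L (gmap a b y) * ((b - a) * (sigmoidFn y * (1 - sigmoidFn y))))
        = (-2) * (sigmoidFn x - sigmoidFn y)
          + (L (gmap a b x) * ((b - a) * (sigmoidFn x * (1 - sigmoidFn x)))
            - L (gmap a b y) * ((b - a) * (sigmoidFn y * (1 - sigmoidFn y)))) := by ring
    rw [e]
    calc _ ≤ |(-2 : ℝ) * (sigmoidFn x - sigmoidFn y)|
          + |L (gmap a b x) * ((b - a) * (sigmoidFn x * (1 - sigmoidFn x)))
            - L (gmap a b y) * ((b - a) * (sigmoidFn y * (1 - sigmoidFn y)))| := abs_add_le _ _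
      _ ≤ 2 * |x - y| + K₂ * |x - y| := by
          have h1 : |(-2 : ℝ) * (sigmoidFn x - sigmoidFn y)| ≤ 2 * |x - y| := by
            rw [abs_mul]
            have : |(-2 : ℝ)| = 2 := by norm_num
            rw [this]
            exact mul_le_mul_of_nonneg_left (sigmoid_lip x y) (by norm_num)
          linarith [hQlip x y]
      _ = (2 + K₂) * |x - y| := by ring
  refine ⟨(2 + K₂).toNNReal, LipschitzWith.of_dist_le_mul fun x y => ?_⟩
  rw [Real.dist_eq, Real.dist_eq]
  refine (hFlip x y).trans ?_
  have hco : (2 + K₂) ≤ ((2 + K₂).toNNReal : ℝ) := by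
    rw [Real.coe_toNNReal']
    exact le_max_left _ _
  exact mul_le_mul_of_nonneg_right hco (abs_nonneg _)
end

section
/- Suppose f_X is positive and twice continuously differentiable on (a,b). Let ψ(y) = log f_Y(y). Then for every y ∈ ℝ, with z = (a + b·e^y)/(1 + e^y), the bound |ψ''(y)| ≤ 2 + (b-a)²·|(log f_X)''(z)| + (b-a)·|(log f_X)'(z)| holds. -/
/-- If `f_X` is positive and twice continuously differentiable on `(a,b)`, then
with `ψ(y) = log f_Y(y)` where `f_Y(y) = (b-a)·(e^y/(1+e^y)²)·f_X((a+b·e^y)/(1+e^y))`, for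
every `y ∈ ℝ`, writing `z = (a+b·e^y)/(1+e^y)`, the bound
`|ψ''(y)| ≤ 2 + (b-a)²·|(log f_X)''(z)| + (b-a)·|(log f_X)'(z)|` holds. -/
theorem transformed_density_log_second_deriv_bound (a b : ℝ) (hab : a < b)
    (fX fY : ℝ → ℝ)
    (hfY : ∀ y : ℝ, fY y =
      (b - a) * (Real.exp y / (1 + Real.exp y) ^ 2) *
        fX ((a + b * Real.exp y) / (1 + Real.exp y)))
    (hpos : ∀ x ∈ Set.Ioo a b, 0 < fX x)
    (hsmooth : ContDiffOn ℝ 2 fX (Set.Ioo a b)) :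
    ∀ y : ℝ,
      |deriv (deriv fun t => Real.log (fY t)) y| ≤
        2 + (b - a) ^ 2 *
            |deriv (deriv fun z => Real.log (fX z)) ((a + b * Real.exp y) / (1 + Real.exp y))| +
          (b - a) *
            |deriv (fun z => Real.log (fX z)) ((a + b * Real.exp y) / (1 + Real.exp y))| := by
  have hba : (0:ℝ) < b - a := sub_pos.mpr hab
  set L : ℝ → ℝ := fun t => (a + b * Real.exp t) / (1 + Real.exp t) with hL
  have hden : ∀ t : ℝ, (0:ℝ) < 1 + Real.exp t := fun t => by positivity
  have hLmem : ∀ t, L t ∈ Set.Ioo a b := by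
    intro t
    have he := Real.exp_pos t
    have hd := hden t
    constructor
    · rw [lt_div_iff₀ hd]; nlinarith
    · rw [div_lt_iff₀ hd]; nlinarith
  set g : ℝ → ℝ := fun x => Real.log (fX x) with hg
  have hglog : ContDiffOn ℝ 2 g (Set.Ioo a b) :=
    hsmooth.log (fun x hx => (hpos x hx).ne')
  have hg1 : ContDiffOn ℝ 1 (deriv g) (Set.Ioo a b) :=
    hglog.deriv_of_isOpen isOpen_Ioo (by norm_num)
  have hgd : ∀ x ∈ Set.Ioo a b, HasDerivAt g (deriv g x) x := fun x hx =>
    ((hglog.differentiableOn two_ne_zero).differentiableAt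
      (isOpen_Ioo.mem_nhds hx)).hasDerivAt
  have hg1d : ∀ x ∈ Set.Ioo a b, HasDerivAt (deriv g) (deriv (deriv g) x) x := fun x hx =>
    ((hg1.differentiableOn one_ne_zero).differentiableAt
      (isOpen_Ioo.mem_nhds hx)).hasDerivAt
  have hLderiv : ∀ t : ℝ, HasDerivAt L ((b - a) * Real.exp t / (1 + Real.exp t) ^ 2) t := by
    intro t
    have h1 : HasDerivAt (fun s : ℝ => a + b * Real.exp s) (b * Real.exp t) t :=
      ((Real.hasDerivAt_exp t).const_mul b).const_add a
    have h2 : HasDerivAt (fun s : ℝ => 1 + Real.exp s) (Real.exp t) t :=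
      (Real.hasDerivAt_exp t).const_add 1
    have := h1.div h2 (hden t).ne'
    refine this.congr_deriv ?_
    field_simp
    ring
  have hpsi : (fun t => Real.log (fY t)) =
      fun t => Real.log (b - a) + (t - 2 * Real.log (1 + Real.exp t)) + g (L t) := by
    funext t
    have he := Real.exp_pos t
    have hd := hden t
    have hfz := hpos _ (hLmem t)
    rw [hfY t, Real.log_mul (by positivity) hfz.ne', Real.log_mul hba.ne' (by positivity),
      Real.log_div he.ne' (by positivity), Real.log_exp, Real.log_pow]
    simp only [hg, hL]
    push_cast
    ring
  have hd1 : ∀ t : ℝ, HasDerivAt (fun s => Real.log (fY s))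
      (1 - 2 * (Real.exp t / (1 + Real.exp t)) +
        deriv g (L t) * ((b - a) * Real.exp t / (1 + Real.exp t) ^ 2)) t := by
    intro t
    rw [hpsi]
    have hlog : HasDerivAt (fun s => Real.log (1 + Real.exp s))
        (Real.exp t / (1 + Real.exp t)) t :=
      ((Real.hasDerivAt_exp t).const_add 1).log (hden t).ne'
    have h1 : HasDerivAt (fun s : ℝ => Real.log (b - a) + (s - 2 * Real.log (1 + Real.exp s)))
        (1 - 2 * (Real.exp t / (1 + Real.exp t))) t :=
      ((hasDerivAt_id t).sub (hlog.const_mul 2)).const_add _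
    have h2 : HasDerivAt (fun s => g (L s))
        (deriv g (L t) * ((b - a) * Real.exp t / (1 + Real.exp t) ^ 2)) t :=
      (hgd _ (hLmem t)).comp t (hLderiv t)
    exact h1.add h2
  have hderiv1 : deriv (fun s => Real.log (fY s)) =
      fun t => 1 - 2 * (Real.exp t / (1 + Real.exp t)) +
        deriv g (L t) * ((b - a) * Real.exp t / (1 + Real.exp t) ^ 2) := by
    funext t; exact (hd1 t).deriv
  intro y
  have he := Real.exp_pos y
  have hd := hden y
  have hLy := hLmem y
  have hA : HasDerivAt (fun t => Real.exp t / (1 + Real.exp t))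
      (Real.exp y / (1 + Real.exp y) ^ 2) y := by
    have h2 : HasDerivAt (fun s : ℝ => 1 + Real.exp s) (Real.exp y) y :=
      (Real.hasDerivAt_exp y).const_add 1
    have := (Real.hasDerivAt_exp y).div h2 hd.ne'
    refine this.congr_deriv ?_
    field_simp
    ring
  have hW : HasDerivAt (fun t => (b - a) * Real.exp t / (1 + Real.exp t) ^ 2)
      ((b - a) * (Real.exp y * (1 - Real.exp y)) / (1 + Real.exp y) ^ 3) y := by
    have h1 : HasDerivAt (fun t : ℝ => (b - a) * Real.exp t) ((b - a) * Real.exp y) y :=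
      (Real.hasDerivAt_exp y).const_mul _
    have h2 : HasDerivAt (fun s : ℝ => (1 + Real.exp s) ^ 2)
        ((2 : ℕ) * (1 + Real.exp y) ^ 1 * Real.exp y) y :=
      ((Real.hasDerivAt_exp y).const_add 1).pow 2
    have := h1.div h2 (by positivity)
    refine this.congr_deriv ?_
    field_simp
    ring
  have hB : HasDerivAt (fun t => deriv g (L t) * ((b - a) * Real.exp t / (1 + Real.exp t) ^ 2))
      (deriv (deriv g) (L y) * ((b - a) * Real.exp y / (1 + Real.exp y) ^ 2) *
          ((b - a) * Real.exp y / (1 + Real.exp y) ^ 2) +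
        deriv g (L y) * ((b - a) * (Real.exp y * (1 - Real.exp y)) / (1 + Real.exp y) ^ 3)) y := by
    have hcomp : HasDerivAt (fun t => deriv g (L t))
        (deriv (deriv g) (L y) * ((b - a) * Real.exp y / (1 + Real.exp y) ^ 2)) y :=
      (hg1d _ hLy).comp y (hLderiv y)
    exact hcomp.mul hW
  have hd2 : HasDerivAt (deriv fun t => Real.log (fY t))
      (-(2 * (Real.exp y / (1 + Real.exp y) ^ 2)) +
        (deriv (deriv g) (L y) * ((b - a) * Real.exp y / (1 + Real.exp y) ^ 2) *
            ((b - a) * Real.exp y / (1 + Real.exp y) ^ 2) +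
          deriv g (L y) * ((b - a) * (Real.exp y * (1 - Real.exp y)) / (1 + Real.exp y) ^ 3))) y := by
    rw [hderiv1]
    have h1 : HasDerivAt (fun t => 1 - 2 * (Real.exp t / (1 + Real.exp t)))
        (-(2 * (Real.exp y / (1 + Real.exp y) ^ 2))) y := by
      simpa using (hA.const_mul 2).const_sub 1
    exact h1.add hB
  have hzy : (a + b * Real.exp y) / (1 + Real.exp y) = L y := rfl
  rw [hzy, hd2.deriv]
  -- now bound
  set G1 := deriv g (L y) with hG1
  set G2 := deriv (deriv g) (L y) with hG2
  set c : ℝ := Real.exp y / (1 + Real.exp y) ^ 2 with hc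
  have hc0 : 0 < c := by positivity
  have hc1 : c ≤ 1 := by
    rw [hc, div_le_one (by positivity)]
    nlinarith
  have hq : (b - a) * Real.exp y / (1 + Real.exp y) ^ 2 = (b - a) * c := by
    rw [hc]; ring
  have hrr : |(b - a) * (Real.exp y * (1 - Real.exp y)) / (1 + Real.exp y) ^ 3| ≤ b - a := by
    rw [abs_div, abs_mul, abs_mul, abs_of_pos hba, abs_of_pos he,
      abs_of_pos (show (0:ℝ) < (1 + Real.exp y)^3 by positivity)]
    rw [div_le_iff₀ (by positivity)]
    have h1 : |1 - Real.exp y| ≤ 1 + Real.exp y := by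
      rw [abs_le]; constructor <;> nlinarith
    have h2 : Real.exp y * |1 - Real.exp y| ≤ Real.exp y * (1 + Real.exp y) :=
      mul_le_mul_of_nonneg_left h1 he.le
    have h3 : Real.exp y * (1 + Real.exp y) ≤ (1 + Real.exp y) ^ 3 := by nlinarith
    have h4 : Real.exp y * |1 - Real.exp y| ≤ (1 + Real.exp y) ^ 3 := h2.trans h3
    exact mul_le_mul_of_nonneg_left h4 hba.le
  have t1 : |(-(2 * c))| ≤ 2 := by
    rw [abs_neg, abs_of_pos (by positivity)]; linarith
  have t2 : |G2 * ((b - a) * Real.exp y / (1 + Real.exp y) ^ 2) *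
      ((b - a) * Real.exp y / (1 + Real.exp y) ^ 2)| ≤ (b - a) ^ 2 * |G2| := by
    rw [abs_mul, abs_mul, hq, abs_of_nonneg (mul_nonneg hba.le hc0.le)]
    have hbc0 : 0 ≤ (b - a) * c := mul_nonneg hba.le hc0.le
    have hbc : (b - a) * c ≤ b - a := by nlinarith
    have hcsq : ((b - a) * c) * ((b - a) * c) ≤ (b - a) ^ 2 := by
      nlinarith [mul_le_mul hbc hbc hbc0 hba.le]
    calc |G2| * ((b - a) * c) * ((b - a) * c) = |G2| * (((b - a) * c) * ((b - a) * c)) := by ring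
      _ ≤ |G2| * (b - a) ^ 2 := mul_le_mul_of_nonneg_left hcsq (abs_nonneg G2)
      _ = (b - a) ^ 2 * |G2| := by ring
  have t3 : |G1 * ((b - a) * (Real.exp y * (1 - Real.exp y)) / (1 + Real.exp y) ^ 3)| ≤
      (b - a) * |G1| := by
    rw [abs_mul]
    calc |G1| * |(b - a) * (Real.exp y * (1 - Real.exp y)) / (1 + Real.exp y) ^ 3|
        ≤ |G1| * (b - a) := mul_le_mul_of_nonneg_left hrr (abs_nonneg G1)
      _ = (b - a) * |G1| := by ring
  calc |(-(2 * c) + (G2 * ((b - a) * Real.exp y / (1 + Real.exp y) ^ 2) *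
            ((b - a) * Real.exp y / (1 + Real.exp y) ^ 2) +
          G1 * ((b - a) * (Real.exp y * (1 - Real.exp y)) / (1 + Real.exp y) ^ 3)))|
      ≤ |(-(2 * c))| + (|G2 * ((b - a) * Real.exp y / (1 + Real.exp y) ^ 2) *
            ((b - a) * Real.exp y / (1 + Real.exp y) ^ 2)| +
          |G1 * ((b - a) * (Real.exp y * (1 - Real.exp y)) / (1 + Real.exp y) ^ 3)|) := by
        refine (abs_add_le _ _).trans ?_
        gcongr
        exact abs_add_le _ _
    _ ≤ 2 + (b - a) ^ 2 * |G2| + (b - a) * |G1| := by linarith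
end
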